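/- arXiv:2003.04107 — 5 statements merged into one kernel-verified Lean document; each statement's English description precedes it below -/
import Mathlib

section
/- Let f, g be continuous functions on the closed unit disc, holomorphic on the open unit disc, both nonconstant, such that for every ζ on the unit circle, max(|f(ζ)|, |g(ζ)|) = 1. Then for any ξ on the unit circle there is no injective sequence ζₙ on the unit circle with f(ζₙ) = ξ for all n such that the sequence g(ζₙ) has a cluster point in the open unit disc. -/
open Complex Set MeasureTheory intervalIntegral Metric Filter

-- conj ∘ f ∘ conj is differentiable
lemma differentiableAt_conj_comp_conj {f : ℂ → ℂ} {w : ℂ}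
    (hf : DifferentiableAt ℂ f ((starRingEnd ℂ) w)) :
    DifferentiableAt ℂ (fun z => (starRingEnd ℂ) (f ((starRingEnd ℂ) z))) w := by
  obtain ⟨c, hc⟩ : ∃ c, HasDerivAt f c ((starRingEnd ℂ) w) := ⟨_, hf.hasDerivAt⟩
  set L : ℂ →L[ℝ] ℂ := Complex.conjCLE.toContinuousLinearMap with hL
  have hconj : ∀ p : ℂ, HasFDerivAt (fun z : ℂ => (starRingEnd ℂ) z) L p := by
    intro p
    have := L.hasFDerivAt (x := p)
    convert this using 2
    simp [hL]
  have hF : HasFDerivAt f ((ContinuousLinearMap.smulRight (1 : ℂ →L[ℂ] ℂ) c).restrictScalars ℝ)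
      ((starRingEnd ℂ) w) := (hc.hasFDerivAt).restrictScalars ℝ
  have hcomp1 : HasFDerivAt (fun z => f ((starRingEnd ℂ) z))
      (((ContinuousLinearMap.smulRight (1 : ℂ →L[ℂ] ℂ) c).restrictScalars ℝ).comp L) w :=
    hF.comp w (hconj w)
  have hcomp2 : HasFDerivAt (fun z => (starRingEnd ℂ) (f ((starRingEnd ℂ) z)))
      (L.comp (((ContinuousLinearMap.smulRight (1 : ℂ →L[ℂ] ℂ) c).restrictScalars ℝ).comp L)) w :=
    (hconj (f ((starRingEnd ℂ) w))).comp w hcomp1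
  have hlin : (ContinuousLinearMap.smulRight (1 : ℂ →L[ℂ] ℂ)
      ((starRingEnd ℂ) c)).restrictScalars ℝ
      = L.comp (((ContinuousLinearMap.smulRight (1 : ℂ →L[ℂ] ℂ) c).restrictScalars ℝ).comp L) := by
    apply ContinuousLinearMap.ext
    intro z
    simp [hL, Complex.conjCLE_apply, mul_comm]
  exact (hasFDerivAt_of_restrictScalars ℝ hcomp2 hlin).differentiableAt

-- Möbius map facts
lemma normSq_mobius_sub (w : ℂ) : Complex.normSq (w - I) = Complex.normSq (w + I) - 4 * w.im := by
  simp [Complex.normSq_apply, Complex.sub_re, Complex.sub_im, Complex.add_re, Complex.add_im,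
    Complex.I_re, Complex.I_im]
  ring

lemma abs_mobius_lt_of_im_pos {w : ℂ} (hw : 0 < w.im) :
    ‖(w - I)‖ < ‖(w + I)‖ := by
  have h1 : Complex.normSq (w - I) < Complex.normSq (w + I) := by
    rw [normSq_mobius_sub]; linarith
  have := Real.sqrt_lt_sqrt (Complex.normSq_nonneg _) h1
  simpa [Complex.norm_def] using this

lemma abs_mobius_gt_of_im_neg {w : ℂ} (hw : w.im < 0) :
    ‖(w + I)‖ < ‖(w - I)‖ := by
  have h1 : Complex.normSq (w + I) < Complex.normSq (w - I) := by
    rw [normSq_mobius_sub]; linarith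
  have := Real.sqrt_lt_sqrt (Complex.normSq_nonneg _) h1
  simpa [Complex.norm_def] using this

section Mobius
variable {e : ℂ} (he : ‖e‖ = 1)

noncomputable def mob (e : ℂ) : ℂ → ℂ := fun w => -e * ((w - I) / (w + I))

lemma mob_zero : mob e 0 = e := by simp [mob]

lemma mob_differentiableAt {w : ℂ} (hw : w ≠ -I) : DifferentiableAt ℂ (mob e) w := by
  have hden : w + I ≠ 0 := fun h => hw (by linear_combination h)
  exact ((differentiableAt_id.sub (differentiableAt_const I)).div
    (differentiableAt_id.add (differentiableAt_const I)) hden).const_mul (-e)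

lemma mob_continuousAt {w : ℂ} (hw : w ≠ -I) : ContinuousAt (mob e) w :=
  (mob_differentiableAt hw).continuousAt

lemma abs_mob_lt_one {w : ℂ} (he : ‖e‖ = 1) (hw : 0 < w.im) :
    ‖(mob e w)‖ < 1 := by
  have hden : w + I ≠ 0 := by
    intro h
    have : w = -I := by linear_combination h
    rw [this] at hw
    norm_num [Complex.neg_im, Complex.I_im] at hw
  have h2 : ‖(w + I)‖ > 0 := by
    simpa using (norm_pos_iff.mpr hden)
  rw [mob, norm_mul, norm_div, norm_neg, he, one_mul, div_lt_one h2]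
  exact abs_mobius_lt_of_im_pos hw

lemma abs_mob_ne_one {w : ℂ} (he : ‖e‖ = 1) (hw : w.im ≠ 0) :
    ‖(mob e w)‖ ≠ 1 := by
  rcases lt_or_gt_of_ne hw with h | h
  · -- im < 0 : abs > 1 (or denominator zero case w = -I gives abs = 0)
    by_cases hden : w + I = 0
    · rw [mob, hden]; simp
    have h2 : ‖(w + I)‖ > 0 := norm_pos_iff.mpr hden
    have : ‖(mob e w)‖ > 1 := by
      rw [mob, norm_mul, norm_div, norm_neg, he, one_mul, gt_iff_lt, one_lt_div h2]
      exact abs_mobius_gt_of_im_neg h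
    linarith
  · exact ne_of_lt (abs_mob_lt_one he h)

lemma mob_injective {w₁ w₂ : ℂ} (he : ‖e‖ = 1) (h1 : w₁ ≠ -I) (h2 : w₂ ≠ -I)
    (heq : mob e w₁ = mob e w₂) : w₁ = w₂ := by
  have he0 : e ≠ 0 := by intro h; rw [h] at he; simp at he
  have hd1 : w₁ + I ≠ 0 := fun h => h1 (by linear_combination h)
  have hd2 : w₂ + I ≠ 0 := fun h => h2 (by linear_combination h)
  rw [mob, mob] at heq
  have heq2 : (w₁ - I) / (w₁ + I) = (w₂ - I) / (w₂ + I) :=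
    mul_left_cancel₀ (neg_ne_zero.2 he0) heq
  rw [div_eq_div_iff hd1 hd2] at heq2
  have : (2*I) * w₁ = (2*I) * w₂ := by linear_combination heq2
  have hI : (2*I : ℂ) ≠ 0 := by simp [Complex.ext_iff]
  exact mul_left_cancel₀ hI this

noncomputable def mobInv (e : ℂ) : ℂ → ℂ :=
  fun w => I * ((1 - (starRingEnd ℂ) e * w) / (1 + (starRingEnd ℂ) e * w))

lemma mobInv_self (he : ‖e‖ = 1) : mobInv e e = 0 := by
  have : (starRingEnd ℂ) e * e = 1 := by
    rw [mul_comm, Complex.mul_conj]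
    norm_cast
    rw [← Complex.sq_norm, he]; norm_num
  simp [mobInv, this]

lemma mobInv_continuousAt (he : ‖e‖ = 1) : ContinuousAt (mobInv e) e := by
  have h1 : (starRingEnd ℂ) e * e = 1 := by
    rw [mul_comm, Complex.mul_conj]
    norm_cast
    rw [← Complex.sq_norm, he]; norm_num
  have hden : (1 : ℂ) + (starRingEnd ℂ) e * e ≠ 0 := by rw [h1]; norm_num
  apply ContinuousAt.mul continuousAt_const
  exact ContinuousAt.div
    (continuousAt_const.sub (continuousAt_const.mul continuousAt_id))
    (continuousAt_const.add (continuousAt_const.mul continuousAt_id)) hden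

lemma mob_mobInv (he : ‖e‖ = 1) {w : ℂ} (hw : w ≠ -e) : mob e (mobInv e w) = w := by
  have hce : e * (starRingEnd ℂ) e = 1 := by
    rw [Complex.mul_conj]
    norm_cast
    rw [← Complex.sq_norm, he]; norm_num
  set c := (starRingEnd ℂ) e * w with hc
  have hden : (1:ℂ) + c ≠ 0 := by
    intro h
    apply hw
    have hcm : c = -1 := by linear_combination h
    calc w = (e * (starRingEnd ℂ) e) * w := by rw [hce, one_mul]
      _ = e * c := by rw [hc]; ring
      _ = -e := by rw [hcm]; ring
  have h2I : (2*I:ℂ) ≠ 0 := by simp [Complex.ext_iff]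
  have e1 : I * ((1 - c)/(1+c)) - I = (-2*I*c)/(1+c) := by field_simp; ring
  have e2 : I * ((1 - c)/(1+c)) + I = (2*I)/(1+c) := by field_simp; ring
  have key : (I * ((1 - c)/(1+c)) - I) / (I * ((1 - c)/(1+c)) + I) = -c := by
    rw [e1, e2, div_div_div_comm, div_self hden, div_one]
    field_simp
  have hm : mobInv e w = I * ((1 - c)/(1+c)) := by rw [mobInv, hc]
  rw [mob, hm, key]
  calc -e * -c = (e * (starRingEnd ℂ) e) * w := by rw [hc]; ring
    _ = w := by rw [hce, one_mul]

end Mobius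


lemma analyticAt_of_differentiable_off_real {q : ℂ → ℂ} {V : Set ℂ} (hV : IsOpen V)
    (hc : ContinuousOn q V)
    (hd : ∀ z ∈ V, z.im ≠ 0 → DifferentiableAt ℂ q z)
    {x₀ : ℝ} (hx₀ : (x₀ : ℂ) ∈ V) : AnalyticAt ℂ q (x₀ : ℂ) := by
  obtain ⟨ε, hε0, hεV⟩ := Metric.isOpen_iff.1 hV _ hx₀
  set δ : ℝ := ε / 3 with hδ
  have hδ0 : 0 < δ := by positivity
  set K : Set ℂ := {z : ℂ | z.re ∈ Icc (x₀ - δ) (x₀ + δ) ∧ z.im ∈ Icc (-δ) δ} with hK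
  have hKV : K ⊆ V := by
    intro z hz
    apply hεV
    have h1 : |z.re - x₀| ≤ δ := abs_le.2 ⟨by linarith [hz.1.1], by linarith [hz.1.2]⟩
    have h2 : |z.im| ≤ δ := abs_le.2 ⟨hz.2.1, hz.2.2⟩
    have : ‖(z - x₀)‖ ≤ |(z - x₀).re| + |(z - x₀).im| := Complex.norm_le_abs_re_add_abs_im _
    simp only [Complex.sub_re, Complex.ofReal_re, Complex.sub_im, Complex.ofReal_im, sub_zero] at this
    calc dist z (x₀:ℂ) = ‖(z - x₀)‖ := dist_eq_norm _ _
      _ ≤ |z.re - x₀| + |z.im| := this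
      _ ≤ δ + δ := add_le_add h1 h2
      _ < ε := by rw [hδ]; linarith
  have hqK : ContinuousOn q K := hc.mono hKV
  -- integrability helpers
  have hvert : ∀ x' ∈ Icc (x₀ - δ) (x₀ + δ), ∀ a ∈ Icc (-δ) δ, ∀ b ∈ Icc (-δ) δ,
      IntervalIntegrable (fun s : ℝ => q (x' + s * I)) volume a b := by
    intro x' hx' a ha b hb
    apply ContinuousOn.intervalIntegrable
    apply hqK.comp
    · exact (continuous_const.add (Complex.continuous_ofReal.mul continuous_const)).continuousOn
    · intro s hs
      have hs' : s ∈ Icc (-δ) δ := Set.uIcc_subset_Icc ha hb hs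
      constructor <;> simp [hx'.1, hx'.2, hs'.1, hs'.2]
  have hhor : ∀ y' ∈ Icc (-δ) δ, ∀ a ∈ Icc (x₀ - δ) (x₀ + δ), ∀ b ∈ Icc (x₀ - δ) (x₀ + δ),
      IntervalIntegrable (fun t : ℝ => q (t + y' * I)) volume a b := by
    intro y' hy' a ha b hb
    apply ContinuousOn.intervalIntegrable
    apply hqK.comp
    · exact ((Complex.continuous_ofReal).add continuous_const).continuousOn
    · intro t ht
      have ht' : t ∈ Icc (x₀ - δ) (x₀ + δ) := Set.uIcc_subset_Icc ha hb ht
      constructor <;> simp [hy'.1, hy'.2, ht'.1, ht'.2]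
  -- the rectangle identity
  have rect : ∀ x₁ ∈ Icc (x₀ - δ) (x₀ + δ), ∀ x₂ ∈ Icc (x₀ - δ) (x₀ + δ), ∀ y ∈ Icc (-δ) δ,
      (∫ t : ℝ in x₁..x₂, q (t + (0:ℝ) * I)) - (∫ t : ℝ in x₁..x₂, q (t + y * I)) +
        I • (∫ s : ℝ in (0:ℝ)..y, q (x₂ + s * I)) -
        I • (∫ s : ℝ in (0:ℝ)..y, q (x₁ + s * I)) = 0 := by
    intro x₁ hx₁ x₂ hx₂ y hy
    have := Complex.integral_boundary_rect_eq_zero_of_differentiable_on_off_countable q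
      (x₁ : ℂ) ((x₂ : ℂ) + y * I) ∅ Set.countable_empty ?_ ?_
    · simpa using this
    · -- continuity on closed rectangle
      apply hqK.mono
      intro z hz
      rw [Complex.mem_reProdIm] at hz
      have hre : z.re ∈ Set.uIcc x₁ x₂ := by simpa using hz.1
      have him : z.im ∈ Set.uIcc (0:ℝ) y := by simpa using hz.2
      constructor
      · exact Set.uIcc_subset_Icc hx₁ hx₂ hre
      · exact Set.uIcc_subset_Icc (by constructor <;> [linarith [hδ0.le]; exact hδ0.le]) hy him
    · intro z hz
      simp only [Complex.add_re, Complex.add_im, Complex.ofReal_re, Complex.ofReal_im,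
        Complex.mul_re, Complex.mul_im, Complex.I_re, Complex.I_im, mul_zero, mul_one,
        zero_mul, sub_zero, zero_add, add_zero, zero_sub, neg_zero, Set.diff_empty,
        Complex.mem_reProdIm] at hz
      have hzim : z.im ≠ 0 := by
        intro h0
        rw [h0] at hz
        have h1 : y < 0 := by
          rcases min_lt_iff.1 hz.2.1 with h | h
          · exact absurd h (lt_irrefl 0)
          · exact h
        have h2 : 0 < y := by
          rcases lt_max_iff.1 hz.2.2 with h | h
          · exact absurd h (lt_irrefl 0)
          · exact h
        linarith
      apply hd z _ hzim
      apply hKV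
      constructor
      · exact Set.uIcc_subset_Icc hx₁ hx₂ (Set.Ioo_subset_Icc_self hz.1)
      · exact Set.uIcc_subset_Icc ⟨by linarith, hδ0.le⟩ hy (Set.Ioo_subset_Icc_self hz.2)
  -- the primitive
  set G : ℂ → ℂ := fun z => (∫ t : ℝ in x₀..z.re, q (t + (0:ℝ) * I)) +
      I • ∫ s : ℝ in (0:ℝ)..z.im, q (z.re + s * I) with hG
  have hIcc0 : (0:ℝ) ∈ Icc (-δ) δ := by constructor <;> [linarith; exact hδ0.le]
  have hx₀Icc : x₀ ∈ Icc (x₀ - δ) (x₀ + δ) := by constructor <;> linarith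
  have key : ∀ z : ℂ, z.re ∈ Ioo (x₀ - δ) (x₀ + δ) → z.im ∈ Ioo (-δ) δ →
      HasDerivAt G (q z) z := by
    intro z hre him
    have hzK : z ∈ K := ⟨⟨hre.1.le, hre.2.le⟩, ⟨him.1.le, him.2.le⟩⟩
    rw [hasDerivAt_iff_isLittleO]
    rw [Asymptotics.isLittleO_iff]
    intro c hc0
    have hqz : ContinuousAt q z := hc.continuousAt (hV.mem_nhds (hKV hzK))
    obtain ⟨δ', hδ'0, hδ'⟩ : ∃ δ' > 0, ∀ w : ℂ, dist w z ≤ δ' → dist (q w) (q z) ≤ c / 2 := by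
      rcases Metric.continuousAt_iff.1 hqz (c/2) (by positivity) with ⟨d, hd0, hball⟩
      exact ⟨d/2, by positivity, fun w hw => (hball (lt_of_le_of_lt hw (by linarith))).le⟩
    have hm : 0 < min (min (x₀ + δ - z.re) (z.re - (x₀ - δ))) (min (δ - z.im) (z.im + δ)) := by
      apply lt_min (lt_min (by linarith [hre.2]) (by linarith [hre.1]))
        (lt_min (by linarith [him.2]) (by linarith [him.1]))
    set m := min (min (x₀ + δ - z.re) (z.re - (x₀ - δ))) (min (δ - z.im) (z.im + δ)) with hmdef
    have hball : Metric.closedBall z (min (δ'/2) m) ∈ nhds z :=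
      Metric.closedBall_mem_nhds z (lt_min (by positivity) hm)
    filter_upwards [hball] with z' hz'
    rw [Metric.mem_closedBall] at hz'
    set x := z.re
    set y := z.im
    set x' := z'.re
    set y' := z'.im
    have hdist : ‖(z' - z)‖ ≤ min (δ'/2) m := by rwa [← dist_eq_norm]
    have hdx : |x' - x| ≤ ‖(z' - z)‖ := by
      have := Complex.abs_re_le_norm (z' - z); simpa using this
    have hdy : |y' - y| ≤ ‖(z' - z)‖ := by
      have := Complex.abs_im_le_norm (z' - z); simpa using this
    have hxm : |x' - x| ≤ m := le_trans hdx (le_trans hdist (min_le_right _ _))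
    have hym : |y' - y| ≤ m := le_trans hdy (le_trans hdist (min_le_right _ _))
    have hx'Icc : x' ∈ Icc (x₀ - δ) (x₀ + δ) := by
      rw [abs_le] at hxm
      constructor
      · have h2 : m ≤ z.re - (x₀ - δ) := le_trans (min_le_left _ _) (min_le_right _ _)
        linarith [hxm.1]
      · have h2 : m ≤ x₀ + δ - z.re := le_trans (min_le_left _ _) (min_le_left _ _)
        linarith [hxm.2]
    have hy'Icc : y' ∈ Icc (-δ) δ := by
      rw [abs_le] at hym
      constructor
      · have h2 : m ≤ z.im + δ := le_trans (min_le_right _ _) (min_le_right _ _)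
        linarith [hym.1]
      · have h2 : m ≤ δ - z.im := le_trans (min_le_right _ _) (min_le_left _ _)
        linarith [hym.2]
    have hxIcc : x ∈ Icc (x₀ - δ) (x₀ + δ) := ⟨hre.1.le, hre.2.le⟩
    have hyIcc : y ∈ Icc (-δ) δ := ⟨him.1.le, him.2.le⟩
    -- Delta G formula
    have hstepa : (∫ t : ℝ in x₀..x', q (t + (0:ℝ)*I)) - (∫ t : ℝ in x₀..x, q (t + (0:ℝ)*I))
        = ∫ t : ℝ in x..x', q (t + (0:ℝ)*I) := by
      rw [← intervalIntegral.integral_add_adjacent_intervals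
        (hhor 0 hIcc0 x₀ hx₀Icc x hxIcc) (hhor 0 hIcc0 x hxIcc x' hx'Icc)]
      ring
    have hstepb : (∫ s : ℝ in (0:ℝ)..y', q (x' + s*I))
        = (∫ s : ℝ in (0:ℝ)..y, q (x' + s*I)) + ∫ s : ℝ in y..y', q (x' + s*I) := by
      rw [intervalIntegral.integral_add_adjacent_intervals
        (hvert x' hx'Icc 0 hIcc0 y hyIcc) (hvert x' hx'Icc y hyIcc y' hy'Icc)]
    have hrect := rect x hxIcc x' hx'Icc y hyIcc
    have hDG : G z' - G z = (∫ t : ℝ in x..x', q (t + y*I)) + I • ∫ s : ℝ in y..y', q (x' + s*I) := by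
      simp only [hG]
      rw [hstepb]
      have : (∫ t : ℝ in x₀..x', q (↑t + (0:ℝ)*I)) + I • ((∫ s : ℝ in (0:ℝ)..y, q (↑x' + ↑s * I)) + ∫ s : ℝ in y..y', q (↑x' + ↑s * I)) -
          ((∫ t : ℝ in x₀..x, q (↑t + (0:ℝ)*I)) + I • ∫ s : ℝ in (0:ℝ)..y, q (↑x + ↑s * I))
          = ((∫ t : ℝ in x₀..x', q (↑t + (0:ℝ)*I)) - (∫ t : ℝ in x₀..x, q (↑t + (0:ℝ)*I)))
            + (I • (∫ s : ℝ in (0:ℝ)..y, q (↑x' + ↑s * I)) - I • ∫ s : ℝ in (0:ℝ)..y, q (↑x + ↑s * I))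
            + I • ∫ s : ℝ in y..y', q (↑x' + ↑s * I) := by
        simp only [smul_add]; ring
      rw [this, hstepa]
      have hc' : I • (∫ s : ℝ in (0:ℝ)..y, q (↑x' + ↑s * I)) - I • (∫ s : ℝ in (0:ℝ)..y, q (↑x + ↑s * I))
          = (∫ t : ℝ in x..x', q (↑t + ↑y * I)) - ∫ t : ℝ in x..x', q (↑t + (0:ℝ)*I) := by
        have := hrect
        -- rearrange: a - b + c - d = 0 => c - d = b - a
        linear_combination this
      rw [hc']
      ring
    have hsub1 : (∫ t : ℝ in x..x', q (t + y*I)) - (x' - x) • q z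
        = ∫ t : ℝ in x..x', (q (t + y*I) - q z) := by
      rw [intervalIntegral.integral_sub (hhor y hyIcc x hxIcc x' hx'Icc) intervalIntegrable_const]
      simp
    have hsub2 : (∫ s : ℝ in y..y', q (x' + s*I)) - (y' - y) • q z
        = ∫ s : ℝ in y..y', (q (x' + s*I) - q z) := by
      rw [intervalIntegral.integral_sub (hvert x' hx'Icc y hyIcc y' hy'Icc) intervalIntegrable_const]
      simp
    have hzz' : (z' - z) • q z = ((x' - x : ℝ) : ℂ) * q z + I * (((y' - y : ℝ) : ℂ) * q z) := by
      have : z' - z = ((x' - x : ℝ) : ℂ) + ((y' - y : ℝ) : ℂ) * I := by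
        apply Complex.ext <;> simp [x, y, x', y']
      rw [smul_eq_mul, this]; ring
    have hfinal : G z' - G z - (z' - z) • q z
        = (∫ t : ℝ in x..x', (q (t + y*I) - q z)) + I • ∫ s : ℝ in y..y', (q (x' + s*I) - q z) := by
      rw [hDG, hzz', ← hsub1, ← hsub2]
      simp only [Complex.real_smul, smul_eq_mul]
      push_cast
      ring
    rw [hfinal]
    have hb1 : ‖∫ t : ℝ in x..x', (q (t + y*I) - q z)‖ ≤ (c/2) * |x' - x| := by
      apply intervalIntegral.norm_integral_le_of_norm_le_const
      intro t ht
      have ht' : t ∈ Set.uIcc x x' := Set.uIoc_subset_uIcc ht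
      have : dist ((t:ℂ) + y*I) z ≤ δ' := by
        have h1 : ‖((t:ℂ) + y*I - z)‖ = |t - x| := by
          have : (t:ℂ) + y*I - z = ((t - x : ℝ) : ℂ) := by
            apply Complex.ext <;> simp [x, y]
          rw [this, Complex.norm_real, Real.norm_eq_abs]
        rw [Complex.dist_eq, h1]
        have : |t - x| ≤ |x' - x| := abs_sub_left_of_mem_uIcc ht'
        calc |t - x| ≤ |x' - x| := this
          _ ≤ ‖(z' - z)‖ := hdx
          _ ≤ min (δ'/2) m := hdist
          _ ≤ δ' := le_trans (min_le_left _ _) (by linarith)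
      have := hδ' _ this
      rwa [dist_eq_norm] at this
    have hb2 : ‖∫ s : ℝ in y..y', (q (x' + s*I) - q z)‖ ≤ (c/2) * |y' - y| := by
      apply intervalIntegral.norm_integral_le_of_norm_le_const
      intro s hs
      have hs' : s ∈ Set.uIcc y y' := Set.uIoc_subset_uIcc hs
      have : dist ((x':ℂ) + s*I) z ≤ δ' := by
        rw [Complex.dist_eq]
        have h1 : (x':ℂ) + s*I - z = ((x' - x : ℝ):ℂ) + ((s - y : ℝ):ℂ)*I := by
          apply Complex.ext <;> simp [x, y]
        rw [h1]
        have h2 : ‖(((x' - x : ℝ):ℂ) + ((s - y : ℝ):ℂ)*I)‖ ≤ |x' - x| + |s - y| := by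
          calc ‖_‖ ≤ ‖((x' - x : ℝ):ℂ)‖ + ‖(((s - y:ℝ):ℂ)*I)‖ :=
              norm_add_le _ _
            _ = |x' - x| + |s - y| := by
              rw [norm_mul, Complex.norm_I, mul_one, Complex.norm_real, Complex.norm_real, Real.norm_eq_abs, Real.norm_eq_abs]
        have h3 : |s - y| ≤ |y' - y| := abs_sub_left_of_mem_uIcc hs' 
        have h4 : |x' - x| + |s - y| ≤ δ'/2 + δ'/2 := by
          have := le_trans hdx (le_trans hdist (min_le_left _ _))
          have := le_trans (le_trans h3 hdy) (le_trans hdist (min_le_left _ _))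
          linarith
        linarith [le_trans h2 h4]
      have := hδ' _ this
      rwa [dist_eq_norm] at this
    calc ‖(∫ t : ℝ in x..x', (q (t + y*I) - q z)) + I • ∫ s : ℝ in y..y', (q (x' + s*I) - q z)‖
        ≤ ‖∫ t : ℝ in x..x', (q (t + y*I) - q z)‖ + ‖I • ∫ s : ℝ in y..y', (q (x' + s*I) - q z)‖ :=
          norm_add_le _ _
      _ = ‖∫ t : ℝ in x..x', (q (t + y*I) - q z)‖ + ‖∫ s : ℝ in y..y', (q (x' + s*I) - q z)‖ := by
          rw [norm_smul]; simp
      _ ≤ (c/2) * |x' - x| + (c/2) * |y' - y| := add_le_add hb1 hb2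
      _ ≤ (c/2) * ‖z' - z‖ + (c/2) * ‖z' - z‖ := by
          apply add_le_add <;> apply mul_le_mul_of_nonneg_left _ (by positivity)
          · exact hdx
          · exact hdy
      _ = c * ‖z' - z‖ := by ring
  -- conclude
  have hSopen : IsOpen {z : ℂ | z.re ∈ Ioo (x₀ - δ) (x₀ + δ) ∧ z.im ∈ Ioo (-δ) δ} := by
    have : {z : ℂ | z.re ∈ Ioo (x₀ - δ) (x₀ + δ) ∧ z.im ∈ Ioo (-δ) δ}
        = Ioo (x₀ - δ) (x₀ + δ) ×ℂ Ioo (-δ) δ := rfl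
    rw [this]
    exact IsOpen.reProdIm isOpen_Ioo isOpen_Ioo
  have hx₀S : (x₀:ℂ) ∈ {z : ℂ | z.re ∈ Ioo (x₀ - δ) (x₀ + δ) ∧ z.im ∈ Ioo (-δ) δ} := by
    refine ⟨?_, ?_⟩ <;> simp only [Complex.ofReal_re, Complex.ofReal_im, Set.mem_Ioo] <;>
      constructor <;> linarith
  have hGdiff : DifferentiableOn ℂ G {z : ℂ | z.re ∈ Ioo (x₀ - δ) (x₀ + δ) ∧ z.im ∈ Ioo (-δ) δ} :=
    fun z hz => ((key z hz.1 hz.2).differentiableAt).differentiableWithinAt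
  have hGanalytic : AnalyticOnNhd ℂ G _ := hGdiff.analyticOnNhd hSopen
  have hderiv : AnalyticOnNhd ℂ (deriv G) _ := hGanalytic.deriv
  have heq : q =ᶠ[nhds (x₀:ℂ)] deriv G := by
    filter_upwards [hSopen.mem_nhds hx₀S] with z hz
    exact ((key z hz.1 hz.2).deriv).symm
  exact (hderiv _ hx₀S).congr heq.symm


section helpers

noncomputable def reflExt (f F : ℂ → ℂ) : ℂ → ℂ := fun z => if ‖z‖ ≤ 1 then f z else F z

lemma reflExt_of_le {f F : ℂ → ℂ} {z : ℂ} (h : ‖z‖ ≤ 1) : reflExt f F z = f z := if_pos h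

lemma reflExt_of_not_le {f F : ℂ → ℂ} {z : ℂ} (h : ¬ ‖z‖ ≤ 1) : reflExt f F z = F z :=
  if_neg h

lemma conj_inv_of_abs_one {z : ℂ} (hz : ‖z‖ = 1) : ((starRingEnd ℂ) z)⁻¹ = z := by
  apply inv_eq_of_mul_eq_one_right
  rw [mul_comm, Complex.mul_conj]
  norm_cast
  rw [← Complex.sq_norm, hz]; norm_num

end helpers

theorem no_injective_fiber_sequence_with_interior_cluster (f g : ℂ → ℂ)
    (hfc : ContinuousOn f (Metric.closedBall (0:ℂ) 1))
    (hgc : ContinuousOn g (Metric.closedBall (0:ℂ) 1))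
    (hfd : DifferentiableOn ℂ f (Metric.ball (0:ℂ) 1))
    (hgd : DifferentiableOn ℂ g (Metric.ball (0:ℂ) 1))
    (hfnc : ¬ ∃ c : ℂ, ∀ z ∈ Metric.ball (0:ℂ) 1, f z = c)
    (hgnc : ¬ ∃ c : ℂ, ∀ z ∈ Metric.ball (0:ℂ) 1, g z = c)
    (hbd : ∀ ζ ∈ Metric.sphere (0:ℂ) 1,
      max ‖f ζ‖ ‖g ζ‖ = 1) :
    ∀ ξ ∈ Metric.sphere (0:ℂ) 1,
      ¬ ∃ ζ : ℕ → ℂ, Function.Injective ζ ∧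
        (∀ n, ζ n ∈ Metric.sphere (0:ℂ) 1) ∧
        (∀ n, f (ζ n) = ξ) ∧
        ∃ w ∈ Metric.ball (0:ℂ) 1,
          MapClusterPt w Filter.atTop (fun n => g (ζ n)) := by
  intro ξ hξ
  rintro ⟨ζ, hinj, hζs, hfζ, w, hw, hclu⟩
  have hξ1 : ‖ξ‖ = 1 := by simpa [Complex.dist_eq] using hξ
  have habsw : ‖w‖ < 1 := by simpa [Complex.dist_eq] using hw
  -- extract an ultrafilter along which everything converges
  have hL : (Filter.atTop ⊓ Filter.comap (fun n => g (ζ n)) (nhds w)).NeBot := by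
    rw [← forall_mem_nonempty_iff_neBot]
    intro tset htset
    rcases Filter.mem_inf_iff.1 htset with ⟨A, hA, B, hB, rfl⟩
    rcases Filter.mem_comap.1 hB with ⟨S, hS, hSB⟩
    have hfreq := mapClusterPt_iff_frequently.1 hclu S hS
    have hA' : ∀ᶠ n in Filter.atTop, n ∈ A := hA
    obtain ⟨n, hnS, hnA⟩ := (hfreq.and_eventually hA').exists
    exact ⟨n, hnA, hSB hnS⟩
  set 𝒰 : Ultrafilter ℕ := @Ultrafilter.of _ (Filter.atTop ⊓ Filter.comap (fun n => g (ζ n)) (nhds w)) hL with h𝒰def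
  have h𝒰le := Ultrafilter.of_le (Filter.atTop ⊓ Filter.comap (fun n => g (ζ n)) (nhds w))
  have h𝒰top : (𝒰 : Filter ℕ) ≤ Filter.atTop := le_trans h𝒰le inf_le_left
  have h𝒰g : Filter.Tendsto (fun n => g (ζ n)) 𝒰 (nhds w) := by
    rw [Filter.tendsto_iff_comap]
    exact le_trans h𝒰le inf_le_right
  -- limit point on the sphere
  obtain ⟨zs, hzs, hzsle⟩ := (isCompact_sphere (0:ℂ) 1).ultrafilter_le_nhds (𝒰.map ζ) (by
    rw [Ultrafilter.coe_map, Filter.le_principal_iff, Filter.mem_map]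
    apply Filter.univ_mem'
    intro n
    exact hζs n)
  have hζtend : Filter.Tendsto ζ 𝒰 (nhds zs) := by
    rwa [Ultrafilter.coe_map] at hzsle
  have hzscb : zs ∈ Metric.closedBall (0:ℂ) 1 := Metric.sphere_subset_closedBall hzs
  have habs1 : ‖zs‖ = 1 := by simpa [Complex.dist_eq] using hzs
  have hζcb : ∀ n, ζ n ∈ Metric.closedBall (0:ℂ) 1 := fun n => Metric.sphere_subset_closedBall (hζs n)
  have hζtendin : Filter.Tendsto ζ 𝒰 (nhdsWithin zs (Metric.closedBall (0:ℂ) 1)) :=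
    tendsto_nhdsWithin_iff.2 ⟨hζtend, Filter.Eventually.of_forall hζcb⟩
  have hfzs : f zs = ξ := by
    have h1 : Filter.Tendsto (fun n => f (ζ n)) 𝒰 (nhds (f zs)) :=
      ((hfc zs hzscb).tendsto).comp hζtendin
    have h2 : Filter.Tendsto (fun n => f (ζ n)) 𝒰 (nhds ξ) := by
      simp only [hfζ]; exact tendsto_const_nhds
    exact tendsto_nhds_unique h1 h2
  have hgzs : g zs = w := by
    have h1 : Filter.Tendsto (fun n => g (ζ n)) 𝒰 (nhds (g zs)) :=
      ((hgc zs hzscb).tendsto).comp hζtendin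
    exact tendsto_nhds_unique h1 h𝒰g
  -- neighborhood on which |f| > 1/2 and |g| < 1
  have htf : Filter.Tendsto (fun z => ‖(f z)‖) (nhdsWithin zs (Metric.closedBall (0:ℂ) 1)) (nhds 1) := by
    have h1 := (hfc zs hzscb).tendsto
    rw [hfzs] at h1
    have := (continuous_norm.tendsto ξ).comp h1
    rwa [hξ1] at this
  have htg : Filter.Tendsto (fun z => ‖(g z)‖) (nhdsWithin zs (Metric.closedBall (0:ℂ) 1)) (nhds (‖w‖)) := by
    have h1 := (hgc zs hzscb).tendsto
    rw [hgzs] at h1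
    exact (continuous_norm.tendsto w).comp h1
  have hev : ∀ᶠ z in nhdsWithin zs (Metric.closedBall (0:ℂ) 1),
      1/2 < ‖(f z)‖ ∧ ‖(g z)‖ < 1 := by
    have e1 : ∀ᶠ z in nhdsWithin zs (Metric.closedBall (0:ℂ) 1), 1/2 < ‖(f z)‖ :=
      htf.eventually (eventually_gt_nhds (by norm_num))
    have e2 : ∀ᶠ z in nhdsWithin zs (Metric.closedBall (0:ℂ) 1), ‖(g z)‖ < 1 :=
      htg.eventually (eventually_lt_nhds habsw)
    exact e1.and e2
  obtain ⟨r₁, hr₁0, hr₁⟩ := Metric.mem_nhdsWithin_iff.1 hev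
  -- |f| = 1 on the arc
  have harc : ∀ z ∈ Metric.sphere (0:ℂ) 1, dist z zs < r₁ → ‖(f z)‖ = 1 := by
    intro z hzsp hzd
    have hmax := hbd z hzsp
    have hg1 : ‖(g z)‖ < 1 :=
      (hr₁ ⟨Metric.mem_ball.2 hzd, Metric.sphere_subset_closedBall hzsp⟩).2
    rcases max_cases (‖(f z)‖) (‖(g z)‖) with ⟨h1, _⟩ | ⟨h1, _⟩
    · rw [h1] at hmax; exact hmax
    · rw [h1] at hmax; linarith
  -- the inversion σ
  set σ : ℂ → ℂ := fun z => ((starRingEnd ℂ) z)⁻¹ with hσdef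
  have hzsne : zs ≠ 0 := by
    intro h; rw [h] at habs1; simp at habs1
  have hσzs : σ zs = zs := conj_inv_of_abs_one habs1
  have hσcont : ∀ z : ℂ, z ≠ 0 → ContinuousAt σ z := by
    intro z hz
    have hconjne : (starRingEnd ℂ) z ≠ 0 := by
      simpa using hz
    exact (continuousAt_inv₀ hconjne).comp (Complex.continuous_conj.continuousAt)
  obtain ⟨r₂, hr₂0, hr₂⟩ := Metric.continuousAt_iff.1 (hσcont zs hzsne) r₁ hr₁0
  rw [hσzs] at hr₂
  set r : ℝ := min (min r₁ r₂) (1/2) with hrdef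
  have hr0 : 0 < r := lt_min (lt_min hr₁0 hr₂0) (by norm_num)
  have hrr₁ : r ≤ r₁ := le_trans (min_le_left _ _) (min_le_left _ _)
  have hrr₂ : r ≤ r₂ := le_trans (min_le_left _ _) (min_le_right _ _)
  have hrhalf : r ≤ 1/2 := min_le_right _ _
  set U : Set ℂ := Metric.ball zs r with hUdef
  -- basic facts about U
  have hUne : ∀ z ∈ U, z ≠ 0 := by
    intro z hz h0
    rw [h0] at hz
    have : dist (0:ℂ) zs < r := Metric.mem_ball.1 hz
    rw [Complex.dist_eq, zero_sub, norm_neg, habs1] at this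
    linarith [hrhalf]
  have habsσ : ∀ z : ℂ, ‖(σ z)‖ = (‖z‖)⁻¹ := by
    intro z
    rw [hσdef]
    simp [map_inv₀]
  have hUσ : ∀ z ∈ U, σ z ∈ Metric.ball zs r₁ := by
    intro z hz
    exact hr₂ (lt_of_lt_of_le (Metric.mem_ball.1 hz) hrr₂)
  have hUfg : ∀ z ∈ Metric.closedBall (0:ℂ) 1, z ∈ Metric.ball zs r₁ →
      1/2 < ‖(f z)‖ ∧ ‖(g z)‖ < 1 := by
    intro z h1 h2
    exact hr₁ ⟨h2, h1⟩
  -- the reflection F and glued function h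
  set F : ℂ → ℂ := fun z => ((starRingEnd ℂ) (f (σ z)))⁻¹ with hFdef
  set h : ℂ → ℂ := reflExt f F with hhdef
  have hFf : ∀ z ∈ U, ‖z‖ = 1 → F z = f z := by
    intro z hz habsz
    have hzsp : z ∈ Metric.sphere (0:ℂ) 1 := by
      simp [Complex.dist_eq, habsz]
    have hfz1 : ‖(f z)‖ = 1 :=
      harc z hzsp (lt_of_lt_of_le (Metric.mem_ball.1 hz) hrr₁)
    have : σ z = z := conj_inv_of_abs_one habsz
    rw [hFdef]
    simp only [this]
    exact conj_inv_of_abs_one hfz1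
  -- points of U with |z| ≥ 1 map into the good region under σ
  have hUσgood : ∀ z ∈ U, 1 ≤ ‖z‖ →
      σ z ∈ Metric.closedBall (0:ℂ) 1 ∧ 1/2 < ‖(f (σ z))‖ := by
    intro z hz habsz
    have h1 : ‖(σ z)‖ ≤ 1 := by
      rw [habsσ]
      exact inv_le_one_of_one_le₀ habsz
    have h2 : σ z ∈ Metric.closedBall (0:ℂ) 1 := by
      simpa [Complex.dist_eq] using h1
    exact ⟨h2, (hUfg (σ z) h2 (hUσ z hz)).1⟩
  have hconjne : ∀ u : ℂ, ‖u‖ ≠ 0 → (starRingEnd ℂ) u ≠ 0 := by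
    intro u hu h0
    apply hu
    have : u = 0 := by simpa using congrArg (starRingEnd ℂ) h0
    rw [this]; simp
  -- continuity of h on U
  have hcont : ContinuousOn h U := by
    intro z hz
    rcases lt_trichotomy (‖z‖) 1 with hlt | heq | hgt
    · -- interior of the disc
      have hzball : z ∈ Metric.ball (0:ℂ) 1 := by simpa [Complex.dist_eq] using hlt
      have hfat : ContinuousAt f z :=
        hfc.continuousAt (Filter.mem_of_superset (isOpen_ball.mem_nhds hzball)
          Metric.ball_subset_closedBall)
      have hevq : h =ᶠ[nhds z] f := by
        filter_upwards [isOpen_ball.mem_nhds hzball] with y hy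
        have : ‖y‖ ≤ 1 := le_of_lt (by simpa [Complex.dist_eq] using hy)
        rw [hhdef]; exact reflExt_of_le this
      exact (hfat.congr hevq.symm).continuousWithinAt
    · -- on the circle: glue
      set s : Set ℂ := U ∩ {y | ‖y‖ ≤ 1} with hsdef
      set t : Set ℂ := U ∩ {y | 1 ≤ ‖y‖} with htdef
      have hsub : U ⊆ s ∪ t := by
        intro y hy
        rcases le_total (‖y‖) 1 with hy1 | hy1
        · exact Or.inl ⟨hy, hy1⟩
        · exact Or.inr ⟨hy, hy1⟩
      have hzcb : z ∈ Metric.closedBall (0:ℂ) 1 := by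
        simp [Complex.dist_eq, heq.le]
      have hcs : ContinuousWithinAt h s z := by
        apply ContinuousWithinAt.congr ((hfc z hzcb).mono ?_)
        · intro y hy; rw [hhdef]; exact reflExt_of_le hy.2
        · rw [hhdef]; exact reflExt_of_le heq.le
        · intro y hy
          simpa [Complex.dist_eq] using hy.2
      have hct : ContinuousWithinAt h t z := by
        have hFcw : ContinuousWithinAt F t z := by
          have hσcw : ContinuousWithinAt σ t z := (hσcont z (hUne z hz)).continuousWithinAt
          have hmaps : Set.MapsTo σ t (Metric.closedBall (0:ℂ) 1) := by
            intro y hy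
            exact (hUσgood y hy.1 hy.2).1
          have hσzeq : σ z = z := conj_inv_of_abs_one heq
          have hfcw : ContinuousWithinAt f (Metric.closedBall (0:ℂ) 1) (σ z) := by
            rw [hσzeq]; exact hfc z hzcb
          have hcomp : ContinuousWithinAt (fun y => f (σ y)) t z := hfcw.comp hσcw hmaps
          have hconjcomp : ContinuousWithinAt (fun y => (starRingEnd ℂ) (f (σ y))) t z :=
            (Complex.continuous_conj.continuousAt).comp_continuousWithinAt hcomp
          apply hconjcomp.inv₀
          apply hconjne
          have h1 : ‖(f (σ z))‖ = 1 := by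
            rw [hσzeq]
            apply harc z
            · simpa [Complex.dist_eq] using heq
            · exact lt_of_lt_of_le (Metric.mem_ball.1 hz) hrr₁
          rw [h1]; norm_num
        apply hFcw.congr
        · intro y hy
          have hyabs : (1:ℝ) ≤ ‖y‖ := hy.2
          rcases eq_or_lt_of_le hyabs with hy1 | hy1
          · rw [hhdef, reflExt_of_le hy1.symm.le]
            exact (hFf y hy.1 hy1.symm).symm
          · rw [hhdef]; exact reflExt_of_not_le (not_le.2 hy1)
        · rw [hhdef, reflExt_of_le heq.le]
          exact (hFf z hz heq).symm
      exact ((hcs.union hct).mono hsub)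
    · -- outside the circle
      have hFat : ContinuousAt F z := by
        have hσat : ContinuousAt σ z := hσcont z (hUne z hz)
        have hσball : σ z ∈ Metric.ball (0:ℂ) 1 := by
          have : ‖(σ z)‖ < 1 := by
            rw [habsσ]
            rw [inv_lt_one_iff₀]
            right; exact hgt
          simpa [Complex.dist_eq] using this
        have hfat : ContinuousAt f (σ z) :=
          hfc.continuousAt (Filter.mem_of_superset (isOpen_ball.mem_nhds hσball)
            Metric.ball_subset_closedBall)
        have hcomp : ContinuousAt (fun y => f (σ y)) z := hfat.comp hσat
        have hconjcomp : ContinuousAt (fun y => (starRingEnd ℂ) (f (σ y))) z :=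
          (Complex.continuous_conj.continuousAt).comp hcomp
        apply hconjcomp.inv₀
        apply hconjne
        have h12 : 1/2 < ‖(f (σ z))‖ := (hUσgood z hz hgt.le).2
        intro hh0
        rw [hh0] at h12
        linarith
      have hevq : h =ᶠ[nhds z] F := by
        have hopen : IsOpen {y : ℂ | 1 < ‖y‖} :=
          isOpen_lt continuous_const continuous_norm
        filter_upwards [hopen.mem_nhds hgt] with y hy
        rw [hhdef]; exact reflExt_of_not_le (not_le.2 hy)
      exact (hFat.congr hevq.symm).continuousWithinAt
  -- differentiability of h off the circle
  have hdiff : ∀ z ∈ U, ‖z‖ ≠ 1 → DifferentiableAt ℂ h z := by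
    intro z hz hne1
    rcases lt_or_gt_of_ne hne1 with hlt | hgt
    · have hzball : z ∈ Metric.ball (0:ℂ) 1 := by simpa [Complex.dist_eq] using hlt
      have hfat : DifferentiableAt ℂ f z := hfd.differentiableAt (isOpen_ball.mem_nhds hzball)
      have hevq : h =ᶠ[nhds z] f := by
        filter_upwards [isOpen_ball.mem_nhds hzball] with y hy
        have : ‖y‖ ≤ 1 := le_of_lt (by simpa [Complex.dist_eq] using hy)
        rw [hhdef]; exact reflExt_of_le this
      exact (Filter.EventuallyEq.differentiableAt_iff hevq).2 hfat
    · -- reflection side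
      have hzne : z ≠ 0 := hUne z hz
      have hσball : σ z ∈ Metric.ball (0:ℂ) 1 := by
        have : ‖(σ z)‖ < 1 := by
          rw [habsσ, inv_lt_one_iff₀]
          right; exact hgt
        simpa [Complex.dist_eq] using this
      have hconjinv : (starRingEnd ℂ) (z⁻¹) = σ z := by
        rw [hσdef]; simp [map_inv₀]
      have h1 : DifferentiableAt ℂ (fun u => (starRingEnd ℂ) (f ((starRingEnd ℂ) u))) (z⁻¹) := by
        apply differentiableAt_conj_comp_conj
        rw [hconjinv]
        exact hfd.differentiableAt (isOpen_ball.mem_nhds hσball)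
      have h2 : DifferentiableAt ℂ (fun y : ℂ => y⁻¹) z := differentiableAt_inv hzne
      have h3 : DifferentiableAt ℂ (fun y : ℂ => (starRingEnd ℂ) (f ((starRingEnd ℂ) (y⁻¹)))) z :=
        h1.comp z h2
      have h4 : DifferentiableAt ℂ (fun y : ℂ => ((starRingEnd ℂ) (f ((starRingEnd ℂ) (y⁻¹))))⁻¹) z := by
        apply h3.inv
        rw [hconjinv]
        apply hconjne
        have h12 : 1/2 < ‖(f (σ z))‖ := (hUσgood z hz hgt.le).2
        intro hh0
        rw [hh0] at h12
        linarith
      have heqF : ∀ y : ℂ, ((starRingEnd ℂ) (f ((starRingEnd ℂ) (y⁻¹))))⁻¹ = F y := by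
        intro y
        rw [hFdef, hσdef]
        simp [map_inv₀]
      have hFat : DifferentiableAt ℂ F z := by
        have := h4
        simp only [heqF] at this
        exact this
      have hevq : h =ᶠ[nhds z] F := by
        have hopen : IsOpen {y : ℂ | 1 < ‖y‖} :=
          isOpen_lt continuous_const continuous_norm
        filter_upwards [hopen.mem_nhds hgt] with y hy
        rw [hhdef]; exact reflExt_of_not_le (not_le.2 hy)
      exact (Filter.EventuallyEq.differentiableAt_iff hevq).2 hFat
  -- move to the half-plane picture
  set q : ℂ → ℂ := fun y => h (mob zs y) with hqdef
  set W : Set ℂ := {y : ℂ | y ≠ -I} ∩ (mob zs) ⁻¹' U with hWdef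
  have hWopen : IsOpen W := by
    apply ContinuousOn.isOpen_inter_preimage
    · intro y hy
      exact (mob_continuousAt hy).continuousWithinAt
    · exact isOpen_compl_singleton
    · exact isOpen_ball
  have h0W : (0:ℂ) ∈ W := by
    constructor
    · simp [Complex.ext_iff]
    · simp only [Set.mem_preimage, mob_zero]
      exact Metric.mem_ball_self hr0
  have hqcont : ContinuousOn q W := by
    intro y hy
    exact ((hcont (mob zs y) hy.2).comp
      ((mob_continuousAt hy.1).continuousWithinAt) (fun u hu => hu.2))
  have hqdiff : ∀ y ∈ W, y.im ≠ 0 → DifferentiableAt ℂ q y := by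
    intro y hy him
    exact (hdiff (mob zs y) hy.2 (abs_mob_ne_one habs1 him)).comp y (mob_differentiableAt hy.1)
  have hqa : AnalyticAt ℂ q (((0:ℝ) : ℂ)) :=
    analyticAt_of_differentiable_off_real hWopen hqcont hqdiff (by
      rw [Complex.ofReal_zero]; exact h0W)
  rw [Complex.ofReal_zero] at hqa
  -- the zero sequence
  set tseq : ℕ → ℂ := fun n => mobInv zs (ζ n) with htseqdef
  have htt : Filter.Tendsto tseq 𝒰 (nhds 0) := by
    have := (mobInv_continuousAt habs1).tendsto.comp hζtend
    rwa [mobInv_self habs1] at this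
  have hζball : ∀ᶠ n in (𝒰 : Filter ℕ), ζ n ∈ Metric.ball zs 1 :=
    hζtend (Metric.ball_mem_nhds zs one_pos)
  have hmobt : ∀ᶠ n in (𝒰 : Filter ℕ), mob zs (tseq n) = ζ n := by
    filter_upwards [hζball] with n hn
    apply mob_mobInv habs1
    intro hcontra
    rw [hcontra] at hn
    have : dist (-zs) zs < 1 := Metric.mem_ball.1 hn
    rw [Complex.dist_eq] at this
    have h2 : ‖(-zs - zs)‖ = 2 := by
      rw [show -zs - zs = -(2 * zs) by ring, norm_neg, norm_mul, habs1]
      simp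
    rw [h2] at this
    linarith
  have hqt : ∀ᶠ n in (𝒰 : Filter ℕ), q (tseq n) = ξ := by
    filter_upwards [hmobt] with n hn
    rw [hqdef]
    simp only [hn]
    have habsn : ‖(ζ n)‖ = 1 := by simpa [Complex.dist_eq] using hζs n
    rw [hhdef, reflExt_of_le habsn.le]
    exact hfζ n
  have htne : ∀ᶠ n in (𝒰 : Filter ℕ), tseq n ≠ 0 := by
    have hfin : ({n : ℕ | ζ n = zs}).Finite := by
      apply Set.Subsingleton.finite
      intro a ha b hb
      exact hinj (ha.trans hb.symm)
    have hcof : {n : ℕ | ζ n ≠ zs} ∈ (Filter.cofinite : Filter ℕ) := by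
      rw [Filter.mem_cofinite]
      have he : {n : ℕ | ζ n ≠ zs}ᶜ = {n : ℕ | ζ n = zs} := by ext n; simp
      rw [he]; exact hfin
    have : {n : ℕ | ζ n ≠ zs} ∈ (𝒰 : Filter ℕ) := by
      apply h𝒰top
      rwa [← Nat.cofinite_eq_atTop]
    filter_upwards [this, hmobt] with n hn hmob
    intro h0
    apply hn
    rw [← hmob, h0, mob_zero]
  have hfreqz : ∃ᶠ y in nhdsWithin (0:ℂ) {(0:ℂ)}ᶜ, q y = ξ := by
    have htt' : Filter.Tendsto tseq 𝒰 (nhdsWithin (0:ℂ) {(0:ℂ)}ᶜ) :=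
      tendsto_nhdsWithin_iff.2 ⟨htt, htne⟩
    exact htt'.frequently hqt.frequently
  -- isolated zeros
  have hqsub : AnalyticAt ℂ (fun y => q y - ξ) 0 := hqa.sub analyticAt_const
  rcases hqsub.eventually_eq_zero_or_eventually_ne_zero with hcase | hcase
  · -- q ≡ ξ near 0; propagate to f on the ball
    obtain ⟨ε₂, hε₂0, hball⟩ := Metric.eventually_nhds_iff_ball.1 hcase
    set ρ : ℕ → ℝ := fun k => ε₂/4 * (1 + 1/(k+1)) with hρdef
    have hρpos : ∀ k, 0 < ρ k := by
      intro k
      apply mul_pos (by linarith)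
      have : (0:ℝ) < 1/((k:ℝ)+1) := by positivity
      linarith
    have hρlt : ∀ k, ρ k < ε₂ := by
      intro k
      have h1 : 1/((k:ℝ)+1) ≤ 1 := by
        rw [div_le_one (by positivity)]
        linarith [Nat.cast_nonneg (α := ℝ) k]
      calc ρ k ≤ ε₂/4 * 2 := by
            apply mul_le_mul_of_nonneg_left (by linarith) (by linarith)
        _ < ε₂ := by linarith
    have hρne : ∀ k, ρ k ≠ ε₂/4 := by
      intro k hk
      have h1 : (0:ℝ) < 1/((k:ℝ)+1) := by positivity
      rw [hρdef] at hk
      nlinarith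
    set wseq : ℕ → ℂ := fun k => (ρ k : ℂ) * I with hwseqdef
    set winf : ℂ := ((ε₂/4 : ℝ) : ℂ) * I with hwinfdef
    have hwseqim : ∀ k, (wseq k).im = ρ k := by intro k; simp [hwseqdef]
    have hwinfim : winf.im = ε₂/4 := by simp [hwinfdef]
    have hwseqabs : ∀ k, ‖(wseq k)‖ = ρ k := by
      intro k
      rw [hwseqdef]
      simp [abs_of_pos (hρpos k)]
    have hqwk : ∀ k, q (wseq k) = ξ := by
      intro k
      have : wseq k ∈ Metric.ball (0:ℂ) ε₂ := by
        simp only [Metric.mem_ball, Complex.dist_eq, sub_zero]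
        rw [hwseqabs]; exact hρlt k
      exact sub_eq_zero.1 (hball _ this)
    have hwne : ∀ k, wseq k ≠ winf := by
      intro k hk
      apply hρne k
      have := congrArg Complex.im hk
      rwa [hwseqim, hwinfim] at this
    have hwimpos : ∀ k, 0 < (wseq k).im := by intro k; rw [hwseqim]; exact hρpos k
    have hwinfimpos : 0 < winf.im := by rw [hwinfim]; linarith
    have hwneI : ∀ k, wseq k ≠ -I := by
      intro k hk
      have h2 := congrArg Complex.im hk
      rw [hwseqim] at h2
      simp at h2
      linarith [hρpos k]
    have hwinfneI : winf ≠ -I := by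
      intro hk
      have h2 := congrArg Complex.im hk
      rw [hwinfim] at h2
      simp at h2
      linarith
    have hfwk : ∀ k, f (mob zs (wseq k)) = ξ := by
      intro k
      have h1 := hqwk k
      simp only [hqdef] at h1
      have habsk : ‖(mob zs (wseq k))‖ < 1 := abs_mob_lt_one habs1 (hwimpos k)
      rw [hhdef, reflExt_of_le habsk.le] at h1
      exact h1
    set a : ℂ := mob zs winf with hadef
    have ha : a ∈ Metric.ball (0:ℂ) 1 := by
      have h2 := abs_mob_lt_one habs1 hwinfimpos
      simpa [Complex.dist_eq, hadef] using h2
    have hmobne : ∀ k, mob zs (wseq k) ≠ a := by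
      intro k hk
      exact hwne k (mob_injective habs1 (hwneI k) hwinfneI hk)
    have hρtend : Filter.Tendsto ρ Filter.atTop (nhds (ε₂/4)) := by
      rw [hρdef]
      have h1 : Filter.Tendsto (fun k : ℕ => 1/((k:ℝ)+1)) Filter.atTop (nhds 0) :=
        tendsto_one_div_add_atTop_nhds_zero_nat
      have h2 := (((tendsto_const_nhds (x := (1:ℝ)) (f := Filter.atTop)).add h1)).const_mul (ε₂/4)
      simpa using h2
    have hwtend : Filter.Tendsto wseq Filter.atTop (nhds winf) := by
      rw [hwseqdef, hwinfdef]
      exact ((Complex.continuous_ofReal.tendsto _).comp hρtend).mul_const I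
    have hmobtend : Filter.Tendsto (fun k => mob zs (wseq k)) Filter.atTop (nhds a) :=
      (mob_continuousAt hwinfneI).tendsto.comp hwtend
    have hmobtend' : Filter.Tendsto (fun k => mob zs (wseq k)) Filter.atTop
        (nhdsWithin a {a}ᶜ) :=
      tendsto_nhdsWithin_iff.2 ⟨hmobtend, Filter.Eventually.of_forall hmobne⟩
    have hfreqa : ∃ᶠ y in nhdsWithin a {a}ᶜ, f y = ξ :=
      hmobtend'.frequently (Filter.Frequently.of_forall hfwk)
    have hfa : AnalyticOnNhd ℂ f (Metric.ball (0:ℂ) 1) := hfd.analyticOnNhd Metric.isOpen_ball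
    have heqon := hfa.eqOn_of_preconnected_of_frequently_eq analyticOnNhd_const
      (convex_ball (0:ℂ) 1).isPreconnected ha hfreqa
    exact hfnc ⟨ξ, fun z hz => heqon hz⟩
  · exact absurd hfreqz (by
      rw [Filter.not_frequently]
      filter_upwards [hcase] with y hy h0
      exact hy (sub_eq_zero.2 h0))
end

section
/- Let f be holomorphic on an open set containing a point z of the unit circle, such that |f(w)| < 1 for w in the open unit disc near z and |f(w)| > 1 for w outside the closed unit disc near z. Then f'(z) ≠ 0. -/
open Complex Filter Real Topology

/-- In any open interval of length `2π` to the right of `-s`, the cosine of `s + t`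
is positive somewhere. -/
lemma exists_cos_pos (s : ℝ) : ∃ t : ℝ, 0 < t ∧ t < 2 * π ∧ 0 < Real.cos (s + t) := by
  have hpi : (0:ℝ) < π := Real.pi_pos
  have h2pi : (0:ℝ) < 2 * π := by linarith
  obtain ⟨m, hm1, hm2⟩ : ∃ m : ℤ, s ≤ (m:ℝ) * (2 * π) ∧ (m:ℝ) * (2 * π) < s + 2 * π := by
    refine ⟨⌈s / (2 * π)⌉, ?_, ?_⟩
    · rw [← div_le_iff₀ h2pi]
      exact Int.le_ceil _
    · have h2 : ((⌈s / (2 * π)⌉ : ℤ) : ℝ) < s / (2 * π) + 1 := Int.ceil_lt_add_one _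
      have h3 := mul_lt_mul_of_pos_right h2 h2pi
      rwa [add_mul, one_mul, div_mul_cancel₀ _ (ne_of_gt h2pi)] at h3
  rcases eq_or_lt_of_le hm1 with h0 | h0
  · refine ⟨π / 4, by linarith, by linarith, ?_⟩
    rw [show s + π / 4 = π / 4 + (m:ℝ) * (2 * π) by linarith,
      Real.cos_add_int_mul_two_pi, Real.cos_pi_div_four]
    positivity
  · refine ⟨(m:ℝ) * (2 * π) - s, by linarith, by linarith, ?_⟩
    rw [show s + ((m:ℝ) * (2 * π) - s) = (m:ℝ) * (2 * π) by ring, Real.cos_int_mul_two_pi]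
    norm_num

set_option maxHeartbeats 1000000 in
theorem deriv_ne_zero_of_modulus_separation (f : ℂ → ℂ) (z : ℂ)
    (hz : z ∈ Metric.sphere (0:ℂ) 1) (U : Set ℂ) (hU : IsOpen U) (hzU : z ∈ U)
    (hf : DifferentiableOn ℂ f U)
    (hlt : ∀ w ∈ U ∩ Metric.ball (0:ℂ) 1, ‖f w‖ < 1)
    (hgt : ∀ w ∈ U \ Metric.closedBall (0:ℂ) 1, 1 < ‖f w‖) :
    deriv f z ≠ 0 := by
  intro hd
  have hpi : (0:ℝ) < π := Real.pi_pos
  have hzU' : U ∈ 𝓝 z := hU.mem_nhds hzU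
  have hfa : AnalyticAt ℂ f z := hf.analyticAt hzU'
  have hfc : ContinuousAt f z := hfa.continuousAt
  have hz1 : ‖z‖ = 1 := by
    simpa using mem_sphere_zero_iff_norm.mp hz
  -- the curve `t ↦ (1+t) z`
  have hcurve : ContinuousAt (fun t : ℝ => (1 + (t:ℂ)) * z) 0 := by fun_prop
  have hc0 : (1 + ((0:ℝ):ℂ)) * z = z := by simp
  have hcurveT : Filter.Tendsto (fun t : ℝ => (1 + (t:ℂ)) * z) (𝓝 0) (𝓝 z) := by
    have := hcurve.tendsto
    rwa [hc0] at this
  have hUev : ∀ᶠ t : ℝ in 𝓝 0, (1 + (t:ℂ)) * z ∈ U := hcurveT.eventually_mem hzU'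
  have habs : ∀ t : ℝ, ‖(1 + (t:ℂ)) * z‖ = |1 + t| := by
    intro t
    rw [norm_mul, hz1, mul_one, ← Complex.ofReal_one, ← Complex.ofReal_add, Complex.norm_real,
      Real.norm_eq_abs]
  -- |f z| = 1
  have htendA : Filter.Tendsto (fun t : ℝ => ‖f ((1 + (t:ℂ)) * z)‖) (𝓝 0)
      (𝓝 (‖f z‖)) :=
    (continuous_norm.continuousAt.tendsto).comp (hfc.tendsto.comp hcurveT)
  have h_le : ‖f z‖ ≤ 1 := by
    have hA : Filter.Tendsto (fun t : ℝ => ‖f ((1 + (t:ℂ)) * z)‖) (𝓝[<] (0:ℝ))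
        (𝓝 (‖f z‖)) := htendA.mono_left nhdsWithin_le_nhds
    refine le_of_tendsto hA ?_
    have hsmall : ∀ᶠ t : ℝ in 𝓝 0, (-1:ℝ) < t := eventually_gt_nhds (by norm_num)
    filter_upwards [(hUev.and hsmall).filter_mono (nhdsWithin_le_nhds (s := Set.Iio 0)),
      self_mem_nhdsWithin] with t ht htneg
    have htneg : t < 0 := htneg
    refine le_of_lt (hlt _ ⟨ht.1, ?_⟩)
    rw [Metric.mem_ball, dist_zero_right, habs, abs_of_pos (by linarith)]
    linarith
  have h_ge : 1 ≤ ‖f z‖ := by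
    have hA : Filter.Tendsto (fun t : ℝ => ‖f ((1 + (t:ℂ)) * z)‖) (𝓝[>] (0:ℝ))
        (𝓝 (‖f z‖)) := htendA.mono_left nhdsWithin_le_nhds
    refine ge_of_tendsto hA ?_
    filter_upwards [hUev.filter_mono (nhdsWithin_le_nhds (s := Set.Ioi 0)),
      self_mem_nhdsWithin] with t ht htpos
    have htpos : 0 < t := htpos
    refine le_of_lt (hgt _ ⟨ht, ?_⟩)
    simp only [Metric.mem_closedBall, dist_zero_right, not_le, habs]
    rw [abs_of_pos (by linarith : (0:ℝ) < 1 + t)]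
    linarith
  have hfz1 : ‖f z‖ = 1 := le_antisymm h_le h_ge
  -- order of vanishing of f - f z at z
  have hha : AnalyticAt ℂ (fun w => f w - f z) z := hfa.sub analyticAt_const
  by_cases htop : analyticOrderAt (fun w => f w - f z) z = ⊤
  · -- f eventually constant near z: contradiction with hgt
    have hev := analyticOrderAt_eq_top.mp htop
    have hce : ∀ᶠ t : ℝ in 𝓝 0, f ((1 + (t:ℂ)) * z) - f z = 0 := hcurveT.eventually hev
    obtain ⟨t, ⟨ht, htev⟩, htpos⟩ :=
      (((hUev.and hce).filter_mono (nhdsWithin_le_nhds (s := Set.Ioi 0))).and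
        self_mem_nhdsWithin).exists
    have htpos : 0 < t := htpos
    have hmem : (1 + (t:ℂ)) * z ∈ U \ Metric.closedBall 0 1 := by
      refine ⟨ht, ?_⟩
      simp only [Metric.mem_closedBall, dist_zero_right, not_le, habs]
      rw [abs_of_pos (by linarith : (0:ℝ) < 1 + t)]
      linarith
    have h1 := hgt _ hmem
    have heq : f ((1 + (t:ℂ)) * z) = f z := by
      have := sub_eq_zero.mp htev; exact this
    rw [heq, hfz1] at h1
    exact lt_irrefl 1 h1
  · obtain ⟨k, hk⟩ : ∃ k : ℕ, analyticOrderAt (fun w => f w - f z) z = (k : ℕ∞) := ⟨(analyticOrderAt (fun w => f w - f z) z).toNat, (ENat.coe_toNat htop).symm⟩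
    obtain ⟨g, hg, hgz, hev⟩ := (hha.analyticOrderAt_eq_natCast (n := k)).mp hk
    -- k ≠ 0
    have hk0 : k ≠ 0 := by
      intro h0
      have h1 := hev.self_of_nhds
      rw [h0] at h1
      simp at h1
      exact hgz h1.symm
    -- k ≠ 1
    have hk1 : k ≠ 1 := by
      intro h1
      have hev' : f =ᶠ[𝓝 z] fun w => f z + (w - z) * g w := by
        filter_upwards [hev] with w hw
        rw [h1] at hw
        simp only [pow_one, smul_eq_mul] at hw
        linear_combination hw
      have hgd : HasDerivAt g (deriv g z) z := hg.differentiableAt.hasDerivAt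
      have hD : HasDerivAt (fun w => f z + (w - z) * g w) (1 * g z + (z - z) * deriv g z) z :=
        (((hasDerivAt_id z).sub_const z).mul hgd).const_add (f z)
      have h2 : deriv f z = g z := by
        rw [hev'.deriv_eq, hD.deriv]
        ring
      rw [hd] at h2
      exact hgz h2.symm
    have hk2 : 2 ≤ k := by omega
    -- choose a good direction u
    set a : ℂ := (starRingEnd ℂ) (f z) * g z with ha
    have ha0 : a ≠ 0 := by
      apply mul_ne_zero _ hgz
      simp only [ne_eq, map_eq_zero]
      intro h
      rw [h] at hfz1; simp at hfz1
    have hz0 : z ≠ 0 := by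
      intro h; rw [h] at hz1; simp at hz1
    set b : ℂ := a * z ^ k with hb
    have hb0 : b ≠ 0 := mul_ne_zero ha0 (pow_ne_zero _ hz0)
    obtain ⟨t, ht0, ht2, hcos⟩ := exists_cos_pos (Complex.arg b + k * (π / 2))
    set θ : ℝ := t / k with hθ
    have hkpos : (0:ℝ) < k := by
      have : 0 < k := by omega
      exact_mod_cast this
    have hθ0 : 0 < θ := div_pos ht0 hkpos
    have hθπ : θ < π := by
      rw [hθ, div_lt_iff₀ hkpos]
      have hk2' : (2:ℝ) ≤ k := by exact_mod_cast hk2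
      nlinarith
    set x : ℝ := π / 2 + θ with hx
    set u : ℂ := z * Complex.exp ((x:ℂ) * Complex.I) with hu
    have hexpabs : ∀ y : ℝ, ‖Complex.exp ((y:ℂ) * Complex.I)‖ = 1 := by
      intro y
      rw [Complex.norm_exp]
      simp
    have hunorm : Complex.normSq u = 1 := by
      have h1 : ‖u‖ = 1 := by
        rw [hu, norm_mul, hz1, one_mul, hexpabs]
      rw [← Complex.sq_norm, h1]; norm_num
    have hzz : (starRingEnd ℂ) z * z = 1 := by
      rw [mul_comm, Complex.mul_conj]
      have : Complex.normSq z = 1 := by rw [← Complex.sq_norm, hz1]; norm_num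
      rw [this]; norm_num
    -- Re(conj z * u) < 0
    set R : ℝ := ((starRingEnd ℂ) z * u).re with hRdef
    have hR : R < 0 := by
      have h1 : (starRingEnd ℂ) z * u = Complex.exp ((x:ℂ) * Complex.I) := by
        rw [hu, ← mul_assoc, hzz, one_mul]
      rw [hRdef, h1, Complex.exp_ofReal_mul_I_re, hx]
      have hs := Real.sin_pos_of_pos_of_lt_pi hθ0 hθπ
      rw [Real.cos_add]
      simp [Real.cos_pi_div_two, Real.sin_pi_div_two]
      linarith
    -- key positivity at the center
    have hexp_pow : Complex.exp ((x:ℂ) * Complex.I) ^ k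
        = Complex.exp (((k * x : ℝ):ℂ) * Complex.I) := by
      rw [← Complex.exp_nat_mul]
      push_cast
      ring_nf
    have hKey : 0 < ((starRingEnd ℂ) (f z) * u ^ k * g z).re := by
      have h1 : (starRingEnd ℂ) (f z) * u ^ k * g z
          = b * Complex.exp (((k * x : ℝ):ℂ) * Complex.I) := by
        rw [hu, mul_pow, hexp_pow, hb, ha]; ring
      have h2 : b * Complex.exp (((k * x : ℝ):ℂ) * Complex.I)
          = (‖b‖ : ℂ) * Complex.exp (((Complex.arg b + k * x : ℝ):ℂ) * Complex.I) := by
        conv_lhs => rw [← Complex.norm_mul_exp_arg_mul_I b]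
        rw [mul_assoc, ← Complex.exp_add]
        push_cast
        ring_nf
      rw [h1, h2, Complex.re_ofReal_mul, Complex.exp_ofReal_mul_I_re]
      have hkt : (k:ℝ) * θ = t := by
        rw [hθ]; field_simp
      have h3 : Complex.arg b + k * x = Complex.arg b + (k:ℝ) * (π / 2) + t := by
        rw [hx, mul_add, hkt]; ring
      rw [h3]
      have habspos : 0 < ‖b‖ := norm_pos_iff.mpr hb0
      have : 0 < Real.cos (Complex.arg b + (k:ℝ) * (π / 2) + t) := by
        have := hcos
        rwa [add_assoc] at this
      positivity
    -- the curve ε ↦ z + ε u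
    have hc2 : ContinuousAt (fun ε : ℝ => z + (ε:ℂ) * u) 0 := by fun_prop
    have hT : Filter.Tendsto (fun ε : ℝ => z + (ε:ℂ) * u) (𝓝 0) (𝓝 z) := by
      have := hc2.tendsto
      simpa using this
    have E1 : ∀ᶠ ε : ℝ in 𝓝 0, z + (ε:ℂ) * u ∈ U := hT.eventually_mem hzU'
    have E2 : ∀ᶠ ε : ℝ in 𝓝 0,
        f (z + (ε:ℂ) * u) - f z = ((z + (ε:ℂ) * u) - z) ^ k • g (z + (ε:ℂ) * u) :=
      hT.eventually hev
    have hgc : ContinuousAt g z := hg.continuousAt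
    have hφT : Filter.Tendsto (fun ε : ℝ => ((starRingEnd ℂ) (f z) * u ^ k * g (z + (ε:ℂ) * u)).re)
        (𝓝 0) (𝓝 (((starRingEnd ℂ) (f z) * u ^ k * g z).re)) := by
      have hc3 : ContinuousAt (fun w : ℂ => ((starRingEnd ℂ) (f z) * u ^ k * g w).re) z :=
        Complex.continuous_re.continuousAt.comp (continuousAt_const.mul hgc)
      exact hc3.tendsto.comp hT
    have E3 : ∀ᶠ ε : ℝ in 𝓝 0, 0 < ((starRingEnd ℂ) (f z) * u ^ k * g (z + (ε:ℂ) * u)).re :=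
      hφT.eventually (eventually_gt_nhds hKey)
    have E4 : ∀ᶠ ε : ℝ in 𝓝 0, ε < -2 * R := eventually_lt_nhds (by linarith)
    obtain ⟨ε, ⟨⟨⟨hεU, hεeq⟩, hεφ⟩, hεR⟩, hεpos⟩ :=
      (((((E1.and E2).and E3).and E4).filter_mono
        (nhdsWithin_le_nhds (s := Set.Ioi 0))).and self_mem_nhdsWithin).exists
    have hεpos : 0 < ε := hεpos
    set w : ℂ := z + (ε:ℂ) * u with hw
    -- w is inside the unit disc
    have hnq : Complex.normSq w = 1 + (ε ^ 2 + 2 * ε * R) := by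
      rw [hw, Complex.normSq_add]
      have h1 : Complex.normSq z = 1 := by rw [← Complex.sq_norm, hz1]; norm_num
      have h2 : Complex.normSq ((ε:ℂ) * u) = ε ^ 2 := by
        rw [Complex.normSq_mul, hunorm, Complex.normSq_ofReal]; ring
      have h3 : (z * (starRingEnd ℂ) ((ε:ℂ) * u)).re = ε * R := by
        rw [map_mul, Complex.conj_ofReal]
        have e1 : z * ((ε:ℂ) * (starRingEnd ℂ) u) = (ε:ℂ) * (z * (starRingEnd ℂ) u) := by ring
        rw [e1, Complex.re_ofReal_mul]
        have e2 : (z * (starRingEnd ℂ) u).re = ((starRingEnd ℂ) z * u).re := by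
          rw [show (starRingEnd ℂ) z * u = (starRingEnd ℂ) (z * (starRingEnd ℂ) u) by
            rw [map_mul, Complex.conj_conj], Complex.conj_re]
        rw [e2, hRdef]
      rw [h1, h2, h3]; ring
    have hball : w ∈ Metric.ball (0:ℂ) 1 := by
      rw [Metric.mem_ball, dist_zero_right]
      have hlt1 : Complex.normSq w < 1 := by rw [hnq]; nlinarith
      nlinarith [Complex.sq_norm w, norm_nonneg w]
    have hsmall : ‖f w‖ < 1 := hlt w ⟨hεU, hball⟩
    -- but |f w| > 1 from the expansion: contradiction
    have hfw : f w = f z + ((ε:ℂ) * u) ^ k * g w := by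
      have := hεeq
      simp only [add_sub_cancel_left, smul_eq_mul] at this
      rw [hw]
      linear_combination this
    have hre1 : (f z * (starRingEnd ℂ) (((ε:ℂ) * u) ^ k * g w)).re
        = ε ^ k * ((starRingEnd ℂ) (f z) * u ^ k * g w).re := by
      have e1 : f z * (starRingEnd ℂ) (((ε:ℂ) * u) ^ k * g w)
          = (starRingEnd ℂ) ((starRingEnd ℂ) (f z) * (((ε:ℂ) * u) ^ k * g w)) := by
        conv_rhs => rw [map_mul, Complex.conj_conj]
      rw [e1, Complex.conj_re]
      have e2 : (starRingEnd ℂ) (f z) * (((ε:ℂ) * u) ^ k * g w)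
          = ((ε ^ k : ℝ):ℂ) * ((starRingEnd ℂ) (f z) * u ^ k * g w) := by
        push_cast; ring
      rw [e2, Complex.re_ofReal_mul]
    have hnq2 : Complex.normSq (f w) = 1 + Complex.normSq (((ε:ℂ) * u) ^ k * g w)
        + 2 * (f z * (starRingEnd ℂ) (((ε:ℂ) * u) ^ k * g w)).re := by
      have h1 : Complex.normSq (f z) = 1 := by rw [← Complex.sq_norm, hfz1]; norm_num
      rw [hfw, Complex.normSq_add, h1]
    rw [hre1] at hnq2
    have hεk : 0 < ε ^ k := pow_pos hεpos k
    have hbig : 1 < Complex.normSq (f w) := by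
      rw [hnq2]
      have h1 : 0 ≤ Complex.normSq (((ε:ℂ) * u) ^ k * g w) := Complex.normSq_nonneg _
      nlinarith [hεφ]
    have hsm : Complex.normSq (f w) < 1 := by
      nlinarith [Complex.sq_norm (f w), norm_nonneg (f w)]
    linarith
end

section
/- Let F = (f,g) be continuous on the closed unit disc, holomorphic on the open unit disc, with both f and g nonconstant, and F(bΔ) contained in the boundary of the bidisc. Then for every open face Φ of the bidisc, the set F(bΔ) ∩ Φ has no cluster point in Φ. -/
open Complex Set intervalIntegral

noncomputable def Complex.abs : AbsoluteValue ℂ ℝ := NormedField.toAbsoluteValue ℂ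

theorem Complex.norm_eq_abs (z : ℂ) : ‖z‖ = Complex.abs z := rfl

theorem Complex.abs_ofReal (r : ℝ) : Complex.abs (r : ℂ) = |r| := Complex.norm_real r

theorem Complex.abs_I : Complex.abs I = 1 := Complex.norm_I

theorem Complex.abs_conj (z : ℂ) : Complex.abs ((starRingEnd ℂ) z) = Complex.abs z :=
  Complex.norm_conj z

theorem Complex.abs_exp (z : ℂ) : Complex.abs (Complex.exp z) = Real.exp z.re :=
  Complex.norm_exp z

theorem Complex.normSq_eq_abs (z : ℂ) : Complex.normSq z = Complex.abs z ^ 2 :=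
  Complex.normSq_eq_norm_sq z

theorem Complex.abs_mul_exp_arg_mul_I (x : ℂ) :
    ↑(Complex.abs x) * Complex.exp (Complex.arg x * I) = x :=
  Complex.norm_mul_exp_arg_mul_I x

theorem rect_zero {G : ℂ → ℂ} {S : Set ℂ} (hG : ContinuousOn G S)
    (hd : ∀ w ∈ S, w.im ≠ 0 → DifferentiableAt ℂ G w) (z w : ℂ)
    (hsub : Set.uIcc z.re w.re ×ℂ Set.uIcc z.im w.im ⊆ S) :
    (∫ x : ℝ in z.re..w.re, G (x + z.im * I)) - (∫ x : ℝ in z.re..w.re, G (x + w.im * I)) +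
      I • (∫ y : ℝ in z.im..w.im, G (w.re + y * I)) -
      I • (∫ y : ℝ in z.im..w.im, G (z.re + y * I)) = 0 := by
  by_cases h0 : min z.im w.im < 0 ∧ 0 < max z.im w.im
  · -- crossing case: split at the real axis
    have h0m : (0:ℝ) ∈ Set.uIcc z.im w.im := by
      rw [Set.uIcc, Set.mem_Icc]; exact ⟨h0.1.le, h0.2.le⟩
    have hsub1 : Set.uIcc z.re w.re ×ℂ Set.uIcc z.im 0 ⊆ S := by
      refine subset_trans (fun u hu => ?_) hsub
      exact ⟨hu.1, Set.uIcc_subset_uIcc Set.left_mem_uIcc h0m hu.2⟩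
    have hsub2 : Set.uIcc z.re w.re ×ℂ Set.uIcc 0 w.im ⊆ S := by
      refine subset_trans (fun u hu => ?_) hsub
      exact ⟨hu.1, Set.uIcc_subset_uIcc h0m Set.right_mem_uIcc hu.2⟩
    have him1 : ∀ x : ℝ, x ∈ Set.Ioo (min z.im (0:ℝ)) (max z.im 0) → x ≠ 0 := by
      intro x hx hx0; subst hx0
      rcases le_total z.im 0 with h | h
      · rw [max_eq_right h] at hx; exact lt_irrefl _ hx.2
      · rw [min_eq_right h] at hx; exact lt_irrefl _ hx.1
    have him2 : ∀ x : ℝ, x ∈ Set.Ioo (min (0:ℝ) w.im) (max 0 w.im) → x ≠ 0 := by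
      intro x hx hx0; subst hx0
      rcases le_total w.im 0 with h | h
      · rw [max_eq_left h] at hx; exact lt_irrefl _ hx.2
      · rw [min_eq_left h] at hx; exact lt_irrefl _ hx.1
    have h1 := Complex.integral_boundary_rect_eq_zero_of_differentiable_on_off_countable G z
      ((w.re : ℂ)) ∅ countable_empty ?_ ?_
    have h2 := Complex.integral_boundary_rect_eq_zero_of_differentiable_on_off_countable G
      ((z.re : ℂ)) w ∅ countable_empty ?_ ?_
    · simp only [Complex.ofReal_re, Complex.ofReal_im, Complex.ofReal_zero, zero_mul,
        add_zero] at h1 h2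
      have hIR1 : IntervalIntegrable (fun y : ℝ => G (w.re + y * I)) MeasureTheory.volume z.im 0 := by
        apply ContinuousOn.intervalIntegrable
        apply hG.comp (by fun_prop : Continuous fun y : ℝ => (w.re : ℂ) + y * I).continuousOn
        intro y hy
        apply hsub1
        refine ⟨?_, ?_⟩ <;> simp [Set.right_mem_uIcc, hy]
      have hIR2 : IntervalIntegrable (fun y : ℝ => G (w.re + y * I)) MeasureTheory.volume 0 w.im := by
        apply ContinuousOn.intervalIntegrable
        apply hG.comp (by fun_prop : Continuous fun y : ℝ => (w.re : ℂ) + y * I).continuousOn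
        intro y hy
        apply hsub2
        refine ⟨?_, ?_⟩ <;> simp [Set.right_mem_uIcc, hy]
      have hIL1 : IntervalIntegrable (fun y : ℝ => G (z.re + y * I)) MeasureTheory.volume z.im 0 := by
        apply ContinuousOn.intervalIntegrable
        apply hG.comp (by fun_prop : Continuous fun y : ℝ => (z.re : ℂ) + y * I).continuousOn
        intro y hy
        apply hsub1
        refine ⟨?_, ?_⟩ <;> simp [Set.left_mem_uIcc, hy]
      have hIL2 : IntervalIntegrable (fun y : ℝ => G (z.re + y * I)) MeasureTheory.volume 0 w.im := by
        apply ContinuousOn.intervalIntegrable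
        apply hG.comp (by fun_prop : Continuous fun y : ℝ => (z.re : ℂ) + y * I).continuousOn
        intro y hy
        apply hsub2
        refine ⟨?_, ?_⟩ <;> simp [Set.left_mem_uIcc, hy]
      have E1 := intervalIntegral.integral_add_adjacent_intervals hIR1 hIR2
      have E2 := intervalIntegral.integral_add_adjacent_intervals hIL1 hIL2
      simp only [smul_eq_mul] at h1 h2 ⊢
      linear_combination h1 + h2 - I * E1 + I * E2
    · simp only [Complex.ofReal_re, Complex.ofReal_im]
      exact hG.mono hsub2
    · simp only [Complex.ofReal_re, Complex.ofReal_im]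
      rintro x ⟨⟨hxre, hxim⟩, -⟩
      exact hd x (hsub2 ⟨Set.Ioo_subset_Icc_self hxre, Set.Ioo_subset_Icc_self hxim⟩)
        (him2 _ hxim)
    · simp only [Complex.ofReal_re, Complex.ofReal_im]
      exact hG.mono hsub1
    · simp only [Complex.ofReal_re, Complex.ofReal_im]
      rintro x ⟨⟨hxre, hxim⟩, -⟩
      exact hd x (hsub1 ⟨Set.Ioo_subset_Icc_self hxre, Set.Ioo_subset_Icc_self hxim⟩)
        (him1 _ hxim)
  · -- non-crossing
    apply Complex.integral_boundary_rect_eq_zero_of_differentiable_on_off_countable G z w ∅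
      countable_empty (hG.mono hsub)
    rintro x ⟨⟨hxre, hxim⟩, -⟩
    refine hd x (hsub ⟨Set.Ioo_subset_Icc_self hxre, Set.Ioo_subset_Icc_self hxim⟩) ?_
    rcases not_and_or.1 h0 with h | h
    · push_neg at h; exact fun h0 => absurd (h0 ▸ hxim.1) (not_lt.2 h)
    · push_neg at h; exact fun h0 => absurd (h0 ▸ hxim.2) (not_lt.2 h)

theorem removable_line {G : ℂ → ℂ} {S : Set ℂ} (hS : IsOpen S) (hG : ContinuousOn G S)
    (hd : ∀ w ∈ S, w.im ≠ 0 → DifferentiableAt ℂ G w) :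
    ∀ p ∈ S, DifferentiableAt ℂ G p := by
  intro p hp
  obtain ⟨r, hr, hball⟩ := Metric.isOpen_iff.1 hS p hp
  set a : ℝ := p.re with ha
  set b : ℝ := p.im with hb
  set t : ℝ := r / 3 with htdef
  have ht : 0 < t := by positivity
  set Q : Set ℂ := re ⁻¹' Ioo (a - t) (a + t) ∩ im ⁻¹' Ioo (b - t) (b + t) with hQ
  have hQo : IsOpen Q := (isOpen_Ioo.preimage Complex.continuous_re).inter
    (isOpen_Ioo.preimage Complex.continuous_im)
  have hpQ : p ∈ Q := by
    constructor <;> constructor <;> linarith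
  have hQS : ∀ u : ℂ, u.re ∈ Icc (a - t) (a + t) → u.im ∈ Icc (b - t) (b + t) → u ∈ S := by
    intro u h1 h2
    apply hball
    have : Complex.abs (u - p) ≤ |(u - p).re| + |(u - p).im| := Complex.norm_le_abs_re_add_abs_im _
    have h1' : |(u - p).re| ≤ t := by
      rw [Complex.sub_re]; rw [abs_le]; constructor <;> simp only [← ha] <;>
        [linarith [h1.1]; linarith [h1.2]]
    have h2' : |(u - p).im| ≤ t := by
      rw [Complex.sub_im]; rw [abs_le]; constructor <;> simp only [← hb] <;>
        [linarith [h2.1]; linarith [h2.2]]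
    simp only [Metric.mem_ball, Complex.dist_eq]
    calc Complex.abs (u - p) ≤ |(u - p).re| + |(u - p).im| := this
    _ ≤ t + t := add_le_add h1' h2'
    _ < r := by rw [htdef]; linarith
  have hQsub : Q ⊆ S := fun u hu =>
    hQS u (Ioo_subset_Icc_self hu.1) (Ioo_subset_Icc_self hu.2)
  -- rectangles with corners having coordinates in the open box are in S
  have hrect : ∀ x₁ x₂ : ℝ, x₁ ∈ Ioo (a - t) (a + t) → x₂ ∈ Ioo (a - t) (a + t) →
      ∀ y₁ y₂ : ℝ, y₁ ∈ Ioo (b - t) (b + t) → y₂ ∈ Ioo (b - t) (b + t) →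
      Set.uIcc x₁ x₂ ×ℂ Set.uIcc y₁ y₂ ⊆ S := by
    intro x₁ x₂ hx₁ hx₂ y₁ y₂ hy₁ hy₂ u hu
    have h1 : Set.uIcc x₁ x₂ ⊆ Ioo (a - t) (a + t) := Set.OrdConnected.uIcc_subset
      Set.ordConnected_Ioo hx₁ hx₂
    have h2 : Set.uIcc y₁ y₂ ⊆ Ioo (b - t) (b + t) := Set.OrdConnected.uIcc_subset
      Set.ordConnected_Ioo hy₁ hy₂
    exact hQsub ⟨h1 hu.1, h2 hu.2⟩
  -- integrability of horizontal and vertical slices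
  have hih : ∀ (c x₁ x₂ : ℝ), c ∈ Ioo (b - t) (b + t) → x₁ ∈ Ioo (a - t) (a + t) →
      x₂ ∈ Ioo (a - t) (a + t) →
      IntervalIntegrable (fun x : ℝ => G (x + c * I)) MeasureTheory.volume x₁ x₂ := by
    intro c x₁ x₂ hc hx₁ hx₂
    apply ContinuousOn.intervalIntegrable
    apply hG.comp (by fun_prop : Continuous fun x : ℝ => (x : ℂ) + c * I).continuousOn
    intro x hx
    have : Set.uIcc x₁ x₂ ⊆ Ioo (a - t) (a + t) := Set.OrdConnected.uIcc_subset
      Set.ordConnected_Ioo hx₁ hx₂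
    exact hQsub ⟨by simpa using this hx, by simpa using hc⟩
  have hiv : ∀ (c y₁ y₂ : ℝ), c ∈ Ioo (a - t) (a + t) → y₁ ∈ Ioo (b - t) (b + t) →
      y₂ ∈ Ioo (b - t) (b + t) →
      IntervalIntegrable (fun y : ℝ => G (c + y * I)) MeasureTheory.volume y₁ y₂ := by
    intro c y₁ y₂ hc hy₁ hy₂
    apply ContinuousOn.intervalIntegrable
    apply hG.comp (by fun_prop : Continuous fun y : ℝ => (c : ℂ) + y * I).continuousOn
    intro y hy
    have : Set.uIcc y₁ y₂ ⊆ Ioo (b - t) (b + t) := Set.OrdConnected.uIcc_subset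
      Set.ordConnected_Ioo hy₁ hy₂
    exact hQsub ⟨by simpa using hc, by simpa using this hy⟩
  -- the primitive
  set F : ℂ → ℂ := fun u => (∫ x : ℝ in a..u.re, G (x + b * I)) +
      I • ∫ y : ℝ in b..u.im, G (u.re + y * I) with hF
  have hpa : a ∈ Ioo (a - t) (a + t) := by constructor <;> linarith
  have hpb : b ∈ Ioo (b - t) (b + t) := by constructor <;> linarith
  -- difference formula
  have hdiff : ∀ u ∈ Q, ∀ v ∈ Q, F v - F u =
      (∫ x : ℝ in u.re..v.re, G (x + u.im * I)) +
        I • ∫ y : ℝ in u.im..v.im, G (v.re + y * I) := by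
    intro u hu v hv
    have R := rect_zero hG hd ⟨u.re, b⟩ ⟨v.re, u.im⟩ ?_
    swap
    · simp only [show (⟨u.re, b⟩ : ℂ).re = u.re from rfl, show (⟨u.re, b⟩ : ℂ).im = b from rfl,
        show (⟨v.re, u.im⟩ : ℂ).re = v.re from rfl, show (⟨v.re, u.im⟩ : ℂ).im = u.im from rfl]
      exact hrect u.re v.re hu.1 hv.1 b u.im hpb hu.2
    simp only [show (⟨u.re, b⟩ : ℂ).re = u.re from rfl, show (⟨u.re, b⟩ : ℂ).im = b from rfl,
      show (⟨v.re, u.im⟩ : ℂ).re = v.re from rfl, show (⟨v.re, u.im⟩ : ℂ).im = u.im from rfl] at R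
    have A1 := intervalIntegral.integral_add_adjacent_intervals
      (hih b a u.re hpb hpa hu.1) (hih b u.re v.re hpb hu.1 hv.1)
    have A2 := intervalIntegral.integral_add_adjacent_intervals
      (hiv v.re b u.im hv.1 hpb hu.2) (hiv v.re u.im v.im hv.1 hu.2 hv.2)
    simp only [hF, smul_eq_mul] at R A1 A2 ⊢
    linear_combination R - A1 - I * A2
  -- derivative of the primitive
  have key : ∀ u ∈ Q, HasDerivAt F (G u) u := by
    intro u hu
    rw [hasDerivAt_iff_isLittleO, Asymptotics.isLittleO_iff]
    intro ε hε
    have hcont : ContinuousAt G u := hG.continuousAt (hS.mem_nhds (hQsub hu))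
    obtain ⟨δ, hδ, hδ'⟩ := Metric.continuousAt_iff.1 hcont (ε / 2) (by positivity)
    filter_upwards [hQo.mem_nhds hu, Metric.ball_mem_nhds u (show (0:ℝ) < δ / 2 by positivity)]
      with v hvQ hvd
    have hvu : ((v.re - u.re : ℝ) : ℂ) + ((v.im - u.im : ℝ) : ℂ) * I = v - u := by
      simp [Complex.ext_iff]
    have habs1 : |v.re - u.re| ≤ Complex.abs (v - u) := by
      have := Complex.abs_re_le_norm (v - u); rwa [Complex.sub_re] at this
    have habs2 : |v.im - u.im| ≤ Complex.abs (v - u) := by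
      have := Complex.abs_im_le_norm (v - u); rwa [Complex.sub_im] at this
    have hvud : Complex.abs (v - u) < δ / 2 := by
      rw [Metric.mem_ball, Complex.dist_eq] at hvd; exact hvd
    have hb1 : ∀ x ∈ Set.uIoc u.re v.re, ‖G (x + u.im * I) - G u‖ ≤ ε / 2 := by
      intro x hx
      have hxx : |x - u.re| ≤ |v.re - u.re| := by
        rcases Set.mem_uIoc.1 hx with h | h
        · rw [_root_.abs_of_nonneg (by linarith [h.1.le, h.2] : (0:ℝ) ≤ x - u.re)]
          calc x - u.re ≤ v.re - u.re := by linarith [h.2]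
          _ ≤ |v.re - u.re| := le_abs_self _
        · rw [_root_.abs_of_nonpos (by linarith [h.1.le, h.2] : x - u.re ≤ 0)]
          calc -(x - u.re) = u.re - x := by ring
          _ ≤ u.re - v.re := by linarith [h.1.le]
          _ ≤ |v.re - u.re| := by rw [abs_sub_comm]; exact le_abs_self _
      have hdist : dist ((x : ℂ) + u.im * I) u < δ := by
        rw [Complex.dist_eq]
        have : (x : ℂ) + u.im * I - u = ((x - u.re : ℝ) : ℂ) := by
          simp [Complex.ext_iff]
        rw [this, Complex.norm_real, Real.norm_eq_abs]
        calc |x - u.re| ≤ |v.re - u.re| := hxx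
        _ ≤ Complex.abs (v - u) := habs1
        _ < δ / 2 := hvud
        _ < δ := by linarith
      exact (dist_eq_norm _ _).symm.trans_le (hδ' hdist).le
    have hb2 : ∀ y ∈ Set.uIoc u.im v.im, ‖G (v.re + y * I) - G u‖ ≤ ε / 2 := by
      intro y hy
      have hyy : |y - u.im| ≤ |v.im - u.im| := by
        rcases Set.mem_uIoc.1 hy with h | h
        · rw [_root_.abs_of_nonneg (by linarith [h.1.le, h.2] : (0:ℝ) ≤ y - u.im)]
          calc y - u.im ≤ v.im - u.im := by linarith [h.2]
          _ ≤ |v.im - u.im| := le_abs_self _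
        · rw [_root_.abs_of_nonpos (by linarith [h.1.le, h.2] : y - u.im ≤ 0)]
          calc -(y - u.im) = u.im - y := by ring
          _ ≤ u.im - v.im := by linarith [h.1.le]
          _ ≤ |v.im - u.im| := by rw [abs_sub_comm]; exact le_abs_self _
      have hdist : dist ((v.re : ℂ) + y * I) u < δ := by
        rw [Complex.dist_eq]
        have : (v.re : ℂ) + y * I - u = ((v.re - u.re : ℝ) : ℂ) + ((y - u.im : ℝ) : ℂ) * I := by
          simp [Complex.ext_iff]
        rw [this]
        calc Complex.abs (((v.re - u.re : ℝ) : ℂ) + ((y - u.im : ℝ) : ℂ) * I)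
            ≤ Complex.abs ((v.re - u.re : ℝ) : ℂ) + Complex.abs (((y - u.im : ℝ) : ℂ) * I) :=
              Complex.abs.add_le _ _
        _ = |v.re - u.re| + |y - u.im| := by
              rw [map_mul, Complex.abs_I, mul_one, Complex.abs_ofReal, Complex.abs_ofReal]
        _ ≤ Complex.abs (v - u) + |v.im - u.im| := add_le_add habs1 hyy
        _ ≤ Complex.abs (v - u) + Complex.abs (v - u) := add_le_add le_rfl habs2
        _ < δ / 2 + δ / 2 := by linarith
        _ = δ := by ring
      exact (dist_eq_norm _ _).symm.trans_le (hδ' hdist).le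
    have hint1 : IntervalIntegrable (fun x : ℝ => G (x + u.im * I)) MeasureTheory.volume
        u.re v.re := hih u.im u.re v.re hu.2 hu.1 hvQ.1
    have hint2 : IntervalIntegrable (fun y : ℝ => G (v.re + y * I)) MeasureTheory.volume
        u.im v.im := hiv v.re u.im v.im hvQ.1 hu.2 hvQ.2
    have e1 : ∫ x : ℝ in u.re..v.re, (G (x + u.im * I) - G u) =
        (∫ x : ℝ in u.re..v.re, G (x + u.im * I)) - (v.re - u.re) • G u := by
      rw [intervalIntegral.integral_sub hint1 intervalIntegrable_const,
        intervalIntegral.integral_const]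
    have e2 : ∫ y : ℝ in u.im..v.im, (G (v.re + y * I) - G u) =
        (∫ y : ℝ in u.im..v.im, G (v.re + y * I)) - (v.im - u.im) • G u := by
      rw [intervalIntegral.integral_sub hint2 intervalIntegrable_const,
        intervalIntegral.integral_const]
    have hrw : F v - F u - (v - u) • G u =
        (∫ x : ℝ in u.re..v.re, (G (x + u.im * I) - G u)) +
          I • ∫ y : ℝ in u.im..v.im, (G (v.re + y * I) - G u) := by
      rw [hdiff u hu v hvQ, e1, e2]
      simp only [smul_eq_mul, Complex.real_smul, ← hvu]
      push_cast
      ring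
    rw [hrw]
    have n1 : ‖∫ x : ℝ in u.re..v.re, (G (x + u.im * I) - G u)‖ ≤ ε / 2 * |v.re - u.re| :=
      intervalIntegral.norm_integral_le_of_norm_le_const hb1
    have n2 : ‖∫ y : ℝ in u.im..v.im, (G (v.re + y * I) - G u)‖ ≤ ε / 2 * |v.im - u.im| :=
      intervalIntegral.norm_integral_le_of_norm_le_const hb2
    calc ‖(∫ x : ℝ in u.re..v.re, (G (x + u.im * I) - G u)) +
          I • ∫ y : ℝ in u.im..v.im, (G (v.re + y * I) - G u)‖
        ≤ ‖∫ x : ℝ in u.re..v.re, (G (x + u.im * I) - G u)‖ +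
          ‖I • ∫ y : ℝ in u.im..v.im, (G (v.re + y * I) - G u)‖ := norm_add_le _ _
      _ = ‖∫ x : ℝ in u.re..v.re, (G (x + u.im * I) - G u)‖ +
          ‖∫ y : ℝ in u.im..v.im, (G (v.re + y * I) - G u)‖ := by
            rw [norm_smul, Complex.norm_I, one_mul]
      _ ≤ ε / 2 * |v.re - u.re| + ε / 2 * |v.im - u.im| := add_le_add n1 n2
      _ ≤ ε / 2 * Complex.abs (v - u) + ε / 2 * Complex.abs (v - u) := by
            have h2 : (0:ℝ) ≤ ε / 2 := by positivity
            exact add_le_add (mul_le_mul_of_nonneg_left habs1 h2)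
              (mul_le_mul_of_nonneg_left habs2 h2)
      _ = ε * Complex.abs (v - u) := by ring
      _ = ε * ‖v - u‖ := by rw [Complex.norm_eq_abs]
  -- conclude
  have hFd : DifferentiableOn ℂ F Q := fun u hu =>
    (key u hu).differentiableAt.differentiableWithinAt
  have hGa := (hFd.analyticOnNhd hQo).deriv
  have hEq : deriv F =ᶠ[nhds p] G := by
    filter_upwards [hQo.mem_nhds hpQ] with v hv
    exact (key v hv).deriv
  exact hEq.differentiableAt_iff.1 (hGa p hpQ).differentiableAt

theorem conj_conj_hasDerivAt {h : ℂ → ℂ} {d u : ℂ}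
    (hh : HasDerivAt h d ((starRingEnd ℂ) u)) :
    HasDerivAt (fun z => (starRingEnd ℂ) (h ((starRingEnd ℂ) z))) ((starRingEnd ℂ) d) u := by
  rw [hasDerivAt_iff_isLittleO] at hh ⊢
  have hconj : Filter.Tendsto (fun z : ℂ => (starRingEnd ℂ) z) (nhds u)
      (nhds ((starRingEnd ℂ) u)) := (Complex.continuous_conj.tendsto u)
  have H := hh.comp_tendsto hconj
  rw [Asymptotics.isLittleO_iff] at H ⊢
  intro c hc
  filter_upwards [H hc] with z hz
  simp only [Function.comp] at hz
  have e1 : (starRingEnd ℂ) (h ((starRingEnd ℂ) z)) - (starRingEnd ℂ) (h ((starRingEnd ℂ) u)) -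
      (z - u) • (starRingEnd ℂ) d =
      (starRingEnd ℂ) (h ((starRingEnd ℂ) z) - h ((starRingEnd ℂ) u) -
        ((starRingEnd ℂ) z - (starRingEnd ℂ) u) • d) := by
    simp only [smul_eq_mul, map_sub, map_mul, Complex.conj_conj]
  have e2 : ‖(starRingEnd ℂ) z - (starRingEnd ℂ) u‖ = ‖z - u‖ := by
    rw [← map_sub, RCLike.norm_conj]
  rw [e1, RCLike.norm_conj, ← e2]
  exact hz

theorem core {f g : ℂ → ℂ}
    (hcf : ContinuousOn f (Metric.closedBall (0:ℂ) 1))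
    (hcg : ContinuousOn g (Metric.closedBall (0:ℂ) 1))
    (hdf : DifferentiableOn ℂ f (Metric.ball (0:ℂ) 1))
    (hfnc : ¬ ∃ c : ℂ, ∀ z ∈ Metric.ball (0:ℂ) 1, f z = c)
    (hfr : ∀ z ∈ Metric.sphere (0:ℂ) 1, Complex.abs (f z) = 1 ∨ Complex.abs (g z) = 1)
    (ζ w : ℂ) (hw : Complex.abs w < 1)
    (hacc : AccPt (ζ, w) (Filter.principal
      ((fun z => (f z, g z)) '' Metric.sphere (0:ℂ) 1 ∩ (({ζ} : Set ℂ) ×ˢ Metric.ball (0:ℂ) 1)))) :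
    False := by
  have habs_sphere : ∀ z : ℂ, z ∈ Metric.sphere (0:ℂ) 1 → Complex.abs z = 1 := by
    intro z hz; rwa [mem_sphere_zero_iff_norm, Complex.norm_eq_abs] at hz
  -- Step 1 : a sequence of boundary points
  have H : ∀ n : ℕ, ∃ z : ℂ, z ∈ Metric.sphere (0:ℂ) 1 ∧ f z = ζ ∧ g z ≠ w ∧
      dist (g z) w < 1 / (n + 1) := by
    intro n
    obtain ⟨q, ⟨hqU, hqim, hqface⟩, hqne⟩ := accPt_iff_nhds.1 hacc
      (Metric.ball ((ζ, w) : ℂ × ℂ) (1 / (n + 1))) (Metric.ball_mem_nhds _ (by positivity))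
    obtain ⟨z, hz, hfz⟩ := hqim
    have hq1 : q.1 = ζ := hqface.1
    have hfz1 : f z = q.1 := congrArg Prod.fst hfz
    have hfz2 : g z = q.2 := congrArg Prod.snd hfz
    refine ⟨z, hz, hfz1.trans hq1, ?_, ?_⟩
    · intro hgw
      exact hqne (Prod.ext hq1 (by rw [← hfz2, hgw]))
    · rw [hfz2]
      calc dist q.2 w ≤ dist q (ζ, w) := by rw [Prod.dist_eq]; exact le_max_right _ _
      _ < 1 / (n + 1) := by rwa [Metric.mem_ball] at hqU
  choose zs hzs hfzs hgzs hdzs using H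
  -- Step 2: convergence of g along the sequence
  have hgtend : Filter.Tendsto (fun n => g (zs n)) Filter.atTop (nhds w) := by
    rw [tendsto_iff_dist_tendsto_zero]
    exact squeeze_zero (fun n => dist_nonneg) (fun n => (hdzs n).le)
      tendsto_one_div_add_atTop_nhds_zero_nat
  obtain ⟨zst, hzst, φ, hφ, hzφ⟩ := (isCompact_sphere (0:ℂ) 1).tendsto_subseq hzs
  have hsub : Metric.sphere (0:ℂ) 1 ⊆ Metric.closedBall (0:ℂ) 1 :=
    Metric.sphere_subset_closedBall
  have hzsttend : Filter.Tendsto (fun k => zs (φ k)) Filter.atTop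
      (nhdsWithin zst (Metric.closedBall (0:ℂ) 1)) := by
    rw [tendsto_nhdsWithin_iff]
    exact ⟨hzφ, Filter.Eventually.of_forall fun k => hsub (hzs (φ k))⟩
  have hfzst : f zst = ζ := by
    have h1 := (hcf zst (hsub hzst)).tendsto.comp hzsttend
    have he : (fun k => f (zs (φ k))) = fun _ => ζ := funext fun k => hfzs (φ k)
    rw [show ((f ∘ fun k => zs (φ k)) = fun k => f (zs (φ k))) from rfl, he] at h1
    exact (tendsto_nhds_unique h1 tendsto_const_nhds).symm ▸ rfl
  have hgzst : g zst = w := by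
    have h1 := (hcg zst (hsub hzst)).tendsto.comp hzsttend
    have h2 := hgtend.comp hφ.tendsto_atTop
    exact tendsto_nhds_unique h1 h2
  have hζ : Complex.abs ζ = 1 := by
    rcases hfr zst hzst with h | h
    · rwa [hfzst] at h
    · rw [hgzst] at h; linarith
  have hzstne : zst ≠ 0 := by
    intro h0; rw [h0] at hzst
    have := habs_sphere 0 hzst; simp at this
  -- Step 6 : radius ρ
  obtain ⟨ρ₁, hρ₁, hρ₁'⟩ := Metric.continuousWithinAt_iff.1 (hcf zst (hsub hzst)) (1/2)
    (by norm_num)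
  obtain ⟨ρ₂, hρ₂, hρ₂'⟩ := Metric.continuousWithinAt_iff.1 (hcg zst (hsub hzst))
    ((1 - Complex.abs w)/2) (by linarith)
  set ρ : ℝ := min ρ₁ ρ₂ with hρdef
  have hρ : 0 < ρ := lt_min hρ₁ hρ₂
  have hne : ∀ z ∈ Metric.closedBall (0:ℂ) 1, dist z zst < ρ → f z ≠ 0 := by
    intro z hz hdist h0
    have h1 := hρ₁' hz (lt_of_lt_of_le hdist (min_le_left _ _))
    rw [h0, hfzst] at h1
    rw [Complex.dist_eq, zero_sub, norm_neg, Complex.norm_eq_abs, hζ] at h1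
    linarith
  have harc : ∀ z ∈ Metric.sphere (0:ℂ) 1, dist z zst < ρ → Complex.abs (f z) = 1 := by
    intro z hz hdist
    rcases hfr z hz with h | h
    · exact h
    · exfalso
      have h1 := hρ₂' (hsub hz) (lt_of_lt_of_le hdist (min_le_right _ _))
      rw [hgzst] at h1
      have h2 : Complex.abs (g z) ≤ Complex.abs w + dist (g z) w := by
        rw [Complex.dist_eq]
        calc Complex.abs (g z) = Complex.abs (w + (g z - w)) := by ring_nf
        _ ≤ Complex.abs w + Complex.abs (g z - w) := Complex.abs.add_le _ _
      rw [h] at h2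
      linarith
  -- Step 7 : exponential coordinates
  set E : ℂ → ℂ := fun u => zst * Complex.exp (u * I) with hE
  have hEcont : Continuous E := by fun_prop
  have hE0 : E 0 = zst := by simp [hE]
  obtain ⟨δ₀, hδ₀, hδ₀'⟩ := Metric.continuousAt_iff.1 hEcont.continuousAt ρ hρ
  have habsE : ∀ u : ℂ, Complex.abs (E u) = Real.exp (-u.im) := by
    intro u
    rw [hE]
    simp only [map_mul, Complex.abs_exp, Complex.mul_I_re, habs_sphere zst hzst, one_mul]
  have hEdist : ∀ u : ℂ, Complex.abs u < δ₀ → dist (E u) zst < ρ := by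
    intro u hu
    have := hδ₀' (show dist u 0 < δ₀ by rwa [Complex.dist_eq, sub_zero])
    rwa [hE0] at this
  have hEcb : ∀ u : ℂ, 0 ≤ u.im → E u ∈ Metric.closedBall (0:ℂ) 1 := by
    intro u hu
    rw [Metric.mem_closedBall, Complex.dist_eq, sub_zero, Complex.norm_eq_abs, habsE, Real.exp_le_one_iff]
    linarith
  have hEsph : ∀ u : ℂ, u.im = 0 → E u ∈ Metric.sphere (0:ℂ) 1 := by
    intro u hu
    rw [mem_sphere_zero_iff_norm, Complex.norm_eq_abs, habsE, hu, neg_zero, Real.exp_zero]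
  have hEball : ∀ u : ℂ, 0 < u.im → E u ∈ Metric.ball (0:ℂ) 1 := by
    intro u hu
    rw [Metric.mem_ball, Complex.dist_eq, sub_zero, Complex.norm_eq_abs, habsE, Real.exp_lt_one_iff]
    linarith
  have hEdiff : Differentiable ℂ E := by
    rw [hE]
    exact (Complex.differentiable_exp.comp (differentiable_id.mul_const I)).const_mul zst
  -- Step 8 : the reflected function
  set V : Set ℂ := Metric.ball (0:ℂ) δ₀ with hV
  set A : ℂ → ℂ := fun u => f (E u) with hA
  set B : ℂ → ℂ := fun u => (starRingEnd ℂ) ((f (E ((starRingEnd ℂ) u)))⁻¹) with hB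
  set G : ℂ → ℂ := fun u => if 0 ≤ u.im then A u else B u with hG
  have hmemV : ∀ u : ℂ, u ∈ V → Complex.abs u < δ₀ := by
    intro u hu; rwa [hV, Metric.mem_ball, Complex.dist_eq, sub_zero] at hu
  -- continuity of G on V
  have hGcont : ContinuousOn G V := by
    rw [hG]
    apply ContinuousOn.if
    · -- agreement on the frontier
      rintro a ⟨haV, hafr⟩
      have haim : a.im = 0 := by
        have := frontier_le_subset_eq (continuous_const : Continuous fun _ : ℂ => (0:ℝ))
          Complex.continuous_im hafr
        exact this.symm
      have hconja : (starRingEnd ℂ) a = a := Complex.conj_eq_iff_im.2 haim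
      have habsf : Complex.abs (f (E a)) = 1 :=
        harc _ (hEsph a haim) (hEdist a (hmemV a haV))
      show f (E a) = (starRingEnd ℂ) ((f (E ((starRingEnd ℂ) a)))⁻¹)
      rw [hconja, map_inv₀]
      symm
      apply inv_eq_of_mul_eq_one_right
      rw [mul_comm, Complex.mul_conj, Complex.normSq_eq_abs, habsf]
      norm_num
    · -- continuity of A
      apply hcf.comp hEcont.continuousOn
      rintro u ⟨huV, hu0⟩
      have : (0:ℝ) ≤ u.im := by
        have hcl : closure {a : ℂ | 0 ≤ a.im} = {a : ℂ | 0 ≤ a.im} :=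
          (isClosed_le continuous_const Complex.continuous_im).closure_eq
        rw [hcl] at hu0
        exact hu0
      exact hEcb u this
    · -- continuity of B
      have hBc : ContinuousOn B (V ∩ {a : ℂ | a.im ≤ 0}) := by
        rw [hB]
        apply Complex.continuous_conj.comp_continuousOn
        apply ContinuousOn.inv₀
        · apply hcf.comp (hEcont.comp Complex.continuous_conj).continuousOn
          rintro u ⟨huV, hu0⟩
          exact hEcb _ (by rw [Complex.conj_im]; simpa using hu0)
        · rintro u ⟨huV, hu0⟩
          apply hne
          · exact hEcb _ (by rw [Complex.conj_im]; simpa using hu0)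
          · exact hEdist _ (by rw [Complex.abs_conj]; exact hmemV u huV)
      apply hBc.mono
      intro u hu
      refine ⟨hu.1, ?_⟩
      have := closure_lt_subset_le Complex.continuous_im
        (continuous_const : Continuous fun _ : ℂ => (0:ℝ))
      apply this
      have : {a : ℂ | ¬ 0 ≤ a.im} = {b : ℂ | b.im < 0} := by
        ext b; simp [not_le]
      rw [← this]
      exact hu.2
  -- differentiability of G off the real axis
  have hGdiffoff : ∀ u ∈ V, u.im ≠ 0 → DifferentiableAt ℂ G u := by
    intro u huV him
    rcases him.lt_or_gt with him | him
    · -- lower half: use the reflection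
      have hev : G =ᶠ[nhds u] B := by
        filter_upwards [(isOpen_lt Complex.continuous_im continuous_const).mem_nhds him] with
          z hz
        rw [hG]
        simp only [if_neg (not_le.2 hz)]
      have hconj_mem : 0 < ((starRingEnd ℂ) u).im := by rw [Complex.conj_im]; linarith
      have hinner : DifferentiableAt ℂ (fun v => (f (E v))⁻¹) ((starRingEnd ℂ) u) := by
        apply DifferentiableAt.inv
        · exact (hdf.differentiableAt (Metric.isOpen_ball.mem_nhds
            (hEball _ hconj_mem))).comp _ (hEdiff _)
        · exact hne _ (hEcb _ hconj_mem.le)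
            (hEdist _ (by rw [Complex.abs_conj]; exact hmemV u huV))
      have := (conj_conj_hasDerivAt hinner.hasDerivAt).differentiableAt
      exact hev.differentiableAt_iff.2 (by exact this)
    · -- upper half
      have hev : G =ᶠ[nhds u] A := by
        filter_upwards [(isOpen_lt continuous_const Complex.continuous_im).mem_nhds him] with
          z hz
        rw [hG]
        simp only [if_pos hz.le]
      have : DifferentiableAt ℂ A u :=
        (hdf.differentiableAt (Metric.isOpen_ball.mem_nhds (hEball _ him))).comp _ (hEdiff _)
      exact hev.differentiableAt_iff.2 this
  -- Step 12 : G is analytic and constant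
  have hGdiff : ∀ q ∈ V, DifferentiableAt ℂ G q :=
    removable_line Metric.isOpen_ball hGcont hGdiffoff
  have hGdOn : DifferentiableOn ℂ G V := fun q hq => (hGdiff q hq).differentiableWithinAt
  have hGan : AnalyticOnNhd ℂ G V := hGdOn.analyticOnNhd Metric.isOpen_ball
  -- Step 13 : frequently equal to ζ near 0
  set T : ℕ → ℝ := fun k => Complex.arg (zs (φ k) / zst) with hT
  have habsquot : ∀ k, Complex.abs (zs (φ k) / zst) = 1 := by
    intro k
    rw [map_div₀, habs_sphere _ (hzs (φ k)), habs_sphere _ hzst]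
    norm_num
  have hTtend : Filter.Tendsto T Filter.atTop (nhds 0) := by
    have hquot : Filter.Tendsto (fun k => zs (φ k) / zst) Filter.atTop (nhds 1) := by
      have := hzφ.div_const zst
      rwa [div_self hzstne] at this
    have harg := (Complex.continuousAt_arg (by
      rw [Complex.mem_slitPlane_iff]; left; norm_num : (1:ℂ) ∈ Complex.slitPlane)).tendsto
    have := harg.comp hquot
    rwa [Complex.arg_one] at this
  have hTne : ∀ k, T k ≠ 0 := by
    intro k h0
    have hq1 : zs (φ k) / zst = 1 := by
      have := Complex.abs_mul_exp_arg_mul_I (zs (φ k) / zst)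
      rw [habsquot k] at this
      rw [show Complex.arg (zs (φ k) / zst) = (0:ℝ) from h0] at this
      simpa using this.symm
    have : zs (φ k) = zst := (div_eq_one_iff_eq hzstne).1 hq1
    exact hgzs (φ k) (by rw [this, hgzst])
  have hET : ∀ k, E ((T k : ℝ) : ℂ) = zs (φ k) := by
    intro k
    have hq := Complex.abs_mul_exp_arg_mul_I (zs (φ k) / zst)
    rw [habsquot k, Complex.ofReal_one, one_mul] at hq
    show zst * Complex.exp (((T k : ℝ) : ℂ) * I) = zs (φ k)
    rw [show ((T k : ℝ) : ℂ) = ((Complex.arg (zs (φ k) / zst) : ℝ) : ℂ) from rfl, hq,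
      mul_comm, div_mul_cancel₀ _ hzstne]
  have hGT : ∀ k, G (((T k : ℝ) : ℂ)) = ζ := by
    intro k
    rw [hG]
    simp only [Complex.ofReal_im, le_refl, if_pos]
    rw [hA]
    simp only
    rw [hET k]
    exact hfzs (φ k)
  have hfreq : ∃ᶠ u in nhdsWithin (0:ℂ) {(0:ℂ)}ᶜ, G u = ζ := by
    have htendV : Filter.Tendsto (fun k => ((T k : ℝ) : ℂ)) Filter.atTop
        (nhdsWithin (0:ℂ) {(0:ℂ)}ᶜ) := by
      rw [tendsto_nhdsWithin_iff]
      constructor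
      · have := Complex.continuous_ofReal.continuousAt.tendsto.comp hTtend
        simpa [Function.comp_def] using this
      · exact Filter.Eventually.of_forall fun k => by
          simp only [Set.mem_compl_iff, Set.mem_singleton_iff]
          exact fun h => hTne k (by exact_mod_cast h)
    exact htendV.frequently (Filter.Frequently.of_forall fun k => hGT k)
  have h0V : (0:ℂ) ∈ V := by
    rw [hV, Metric.mem_ball, Complex.dist_eq, sub_zero]
    simpa using hδ₀
  have hGζ : Set.EqOn G (fun _ => ζ) V :=
    hGan.eqOn_of_preconnected_of_frequently_eq analyticOnNhd_const
      (convex_ball (0:ℂ) δ₀).isPreconnected h0V hfreq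
  -- Step 15 : transfer constancy to f inside the disc
  set sq : ℕ → ℝ := fun j => δ₀ * (1/2 + 1/(4*(j+1))) with hsq
  have hsqpos : ∀ j, 0 < sq j := by intro j; rw [hsq]; positivity
  have hsqlt : ∀ j, sq j < δ₀ := by
    intro j
    rw [hsq]
    have h0 : (4:ℝ) ≤ 4*((j:ℝ)+1) := by nlinarith [(Nat.cast_nonneg j : (0:ℝ) ≤ (j:ℝ))]
    have h1 : 1/(4*((j:ℝ)+1)) ≤ 1/4 := one_div_le_one_div_of_le (by norm_num) h0
    nlinarith
  have hsqne : ∀ j, sq j ≠ δ₀ / 2 := by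
    intro j
    rw [hsq]
    have : 0 < 1/(4*((j:ℝ)+1)) := by positivity
    intro h
    nlinarith
  have hsqtend : Filter.Tendsto sq Filter.atTop (nhds (δ₀ / 2)) := by
    have h3 : Filter.Tendsto (fun j : ℕ => 1/(4*((j:ℝ)+1))) Filter.atTop (nhds 0) := by
      have heq : (fun j : ℕ => 1/(4*((j:ℝ)+1))) = fun j : ℕ => (1/4:ℝ) * (1/((j:ℝ)+1)) := by
        funext j; field_simp
      rw [heq]
      simpa using tendsto_one_div_add_atTop_nhds_zero_nat.const_mul (1/4:ℝ)
    have h2 := ((tendsto_const_nhds : Filter.Tendsto (fun _ : ℕ => (1/2:ℝ)) Filter.atTop (nhds (1/2))).add h3).const_mul δ₀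
    rw [show δ₀ * ((1:ℝ)/2 + 0) = δ₀/2 by ring] at h2
    exact h2
  set x : ℕ → ℂ := fun j => zst * Complex.exp (-(sq j : ℝ) : ℂ) with hx
  set y₀ : ℂ := zst * Complex.exp (-(δ₀/2 : ℝ) : ℂ) with hy₀
  have hfx : ∀ j, f (x j) = ζ := by
    intro j
    have hmem : ((sq j : ℝ) : ℂ) * I ∈ V := by
      rw [hV, Metric.mem_ball, Complex.dist_eq, sub_zero, Complex.norm_eq_abs, map_mul, Complex.abs_I,
        Complex.abs_ofReal, mul_one, abs_of_pos (hsqpos j)]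
      exact hsqlt j
    have := hGζ hmem
    rw [hG] at this
    simp only [Complex.mul_im, Complex.ofReal_re, Complex.I_im, Complex.ofReal_im,
      Complex.I_re, mul_one, mul_zero, add_zero] at this
    rw [if_pos (hsqpos j).le] at this
    rw [hA] at this
    simp only at this
    rw [hE] at this
    simp only at this
    rw [show ((sq j : ℝ) : ℂ) * I * I = -((sq j : ℝ) : ℂ) by
      rw [mul_assoc, Complex.I_mul_I, mul_neg_one]] at this
    rw [hx]
    exact this
  have hxtend : Filter.Tendsto x Filter.atTop (nhds y₀) := by
    rw [hx, hy₀]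
    have h1 : Filter.Tendsto (fun j => Real.exp (-(sq j))) Filter.atTop
        (nhds (Real.exp (-(δ₀/2)))) :=
      (Real.continuous_exp.continuousAt.tendsto).comp (hsqtend.neg)
    have h2 : Filter.Tendsto (fun j => ((Real.exp (-(sq j)) : ℝ) : ℂ)) Filter.atTop
        (nhds ((Real.exp (-(δ₀/2)) : ℝ) : ℂ)) :=
      (Complex.continuous_ofReal.continuousAt.tendsto).comp h1
    have h3 := h2.const_mul zst
    simp only [Complex.ofReal_exp, Complex.ofReal_neg] at h3
    exact h3
  have hxne : ∀ j, x j ≠ y₀ := by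
    intro j h
    rw [hx, hy₀] at h
    simp only at h
    have h2 := mul_left_cancel₀ hzstne h
    rw [show (-(sq j : ℝ) : ℂ) = ((-(sq j) : ℝ) : ℂ) by push_cast; ring,
      show (-(δ₀/2 : ℝ) : ℂ) = ((-(δ₀/2) : ℝ) : ℂ) by push_cast; ring,
      ← Complex.ofReal_exp, ← Complex.ofReal_exp, Complex.ofReal_inj, Real.exp_eq_exp] at h2
    exact hsqne j (by linarith)
  have hy₀mem : y₀ ∈ Metric.ball (0:ℂ) 1 := by
    rw [hy₀, Metric.mem_ball, Complex.dist_eq, sub_zero, Complex.norm_eq_abs, map_mul, habs_sphere _ hzst, one_mul,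
      show (-(δ₀/2 : ℝ) : ℂ) = ((-(δ₀/2) : ℝ) : ℂ) by push_cast; ring, ← Complex.ofReal_exp,
      Complex.abs_ofReal, abs_of_pos (Real.exp_pos _), Real.exp_lt_one_iff]
    linarith
  have hfreq2 : ∃ᶠ z in nhdsWithin y₀ {y₀}ᶜ, f z = ζ := by
    have htend : Filter.Tendsto x Filter.atTop (nhdsWithin y₀ {y₀}ᶜ) := by
      rw [tendsto_nhdsWithin_iff]
      exact ⟨hxtend, Filter.Eventually.of_forall fun j => hxne j⟩
    exact htend.frequently (Filter.Frequently.of_forall fun j => hfx j)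
  have hfan : AnalyticOnNhd ℂ f (Metric.ball (0:ℂ) 1) := hdf.analyticOnNhd Metric.isOpen_ball
  have hfeq : Set.EqOn f (fun _ => ζ) (Metric.ball (0:ℂ) 1) :=
    hfan.eqOn_of_preconnected_of_frequently_eq analyticOnNhd_const
      (convex_ball (0:ℂ) 1).isPreconnected hy₀mem hfreq2
  exact hfnc ⟨ζ, fun z hz => hfeq hz⟩

theorem no_cluster_point_in_open_face (f g : ℂ → ℂ)
    (hc : ContinuousOn (fun z => (f z, g z)) (Metric.closedBall (0:ℂ) 1))
    (hd : DifferentiableOn ℂ (fun z => (f z, g z)) (Metric.ball (0:ℂ) 1))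
    (hfnc : ¬ ∃ c : ℂ, ∀ z ∈ Metric.ball (0:ℂ) 1, f z = c)
    (hgnc : ¬ ∃ c : ℂ, ∀ z ∈ Metric.ball (0:ℂ) 1, g z = c)
    (hbd : ∀ z ∈ Metric.sphere (0:ℂ) 1,
      (f z, g z) ∈ frontier {p : ℂ × ℂ | ‖p.1‖ < 1 ∧ ‖p.2‖ < 1}) :
    ∀ Φ : Set (ℂ × ℂ),
      ((∃ ζ ∈ Metric.sphere (0:ℂ) 1, Φ = ({ζ} : Set ℂ) ×ˢ Metric.ball (0:ℂ) 1) ∨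
       (∃ ζ ∈ Metric.sphere (0:ℂ) 1, Φ = Metric.ball (0:ℂ) 1 ×ˢ ({ζ} : Set ℂ))) →
      ∀ p ∈ Φ, ¬ AccPt p (Filter.principal
        ((fun z => (f z, g z)) '' Metric.sphere (0:ℂ) 1 ∩ Φ)) := by
  intro Φ hΦ p hp hacc
  have hcf : ContinuousOn f (Metric.closedBall (0:ℂ) 1) := continuous_fst.comp_continuousOn hc
  have hcg : ContinuousOn g (Metric.closedBall (0:ℂ) 1) := continuous_snd.comp_continuousOn hc
  have hdf : DifferentiableOn ℂ f (Metric.ball (0:ℂ) 1) := hd.fst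
  have hdg : DifferentiableOn ℂ g (Metric.ball (0:ℂ) 1) := hd.snd
  have hfr : ∀ z ∈ Metric.sphere (0:ℂ) 1,
      Complex.abs (f z) = 1 ∨ Complex.abs (g z) = 1 := by
    intro z hz
    have h := hbd z hz
    have hset : {p : ℂ × ℂ | ‖p.1‖ < 1 ∧ ‖p.2‖ < 1} =
        (Metric.ball (0:ℂ) 1) ×ˢ (Metric.ball (0:ℂ) 1) := by
      ext q
      simp [Metric.mem_ball, Complex.dist_eq, sub_zero]
    rw [hset, frontier_prod_eq, closure_ball (0:ℂ) one_ne_zero,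
      frontier_ball (0:ℂ) one_ne_zero] at h
    rcases h with h | h
    · right
      have := h.2
      rwa [mem_sphere_zero_iff_norm, Complex.norm_eq_abs] at this
    · left
      have := h.1
      rwa [mem_sphere_zero_iff_norm, Complex.norm_eq_abs] at this
  rcases hΦ with ⟨ζ, hζ, rfl⟩ | ⟨ζ, hζ, rfl⟩
  · obtain ⟨hp1, hp2⟩ := hp
    have hp1' : p.1 = ζ := hp1
    have hw : Complex.abs p.2 < 1 := by
      rw [Metric.mem_ball, Complex.dist_eq, sub_zero] at hp2
      exact hp2
    refine core hcf hcg hdf hfnc hfr ζ p.2 hw ?_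
    rwa [show ((ζ, p.2) : ℂ × ℂ) = p by rw [← hp1']]
  · obtain ⟨hp1, hp2⟩ := hp
    have hp2' : p.2 = ζ := hp2
    have hw : Complex.abs p.1 < 1 := by
      rw [Metric.mem_ball, Complex.dist_eq, sub_zero] at hp1
      exact hp1
    have hfr' : ∀ z ∈ Metric.sphere (0:ℂ) 1,
        Complex.abs (g z) = 1 ∨ Complex.abs (f z) = 1 := fun z hz => (hfr z hz).symm
    refine core hcg hcf hdg hgnc hfr' ζ p.1 hw ?_
    rw [accPt_iff_nhds]
    intro U hU
    have hswap : Filter.Tendsto (Prod.swap : ℂ × ℂ → ℂ × ℂ) (nhds p) (nhds (ζ, p.1)) := by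
      have h1 := continuous_swap.tendsto p
      rwa [show (Prod.swap p : ℂ × ℂ) = (ζ, p.1) by rw [Prod.swap, ← hp2']] at h1
    obtain ⟨q, ⟨hqU, hqim, hqmem⟩, hqne⟩ := accPt_iff_nhds.1 hacc _ (hswap hU)
    refine ⟨q.swap, ⟨hqU, ?_, ?_⟩, ?_⟩
    · obtain ⟨z, hz, hfz⟩ := hqim
      exact ⟨z, hz, by rw [← hfz]; rfl⟩
    · exact ⟨hqmem.2, hqmem.1⟩
    · intro h
      apply hqne
      have := congrArg Prod.swap h
      simp only [Prod.swap_swap] at this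
      rw [this, Prod.swap, ← hp2']
end

section
/- Let f be holomorphic on the open unit disc and continuous on the closed disc with |f| = 1 on an open arc J of the unit circle, f nonconstant. Then the set f⁻¹(ξ) ∩ J is discrete (has no cluster point in J) for every ξ on the unit circle. -/
open Complex Set Metric Filter Topology intervalIntegral

local notation "conj'" => starRingEnd ℂ

lemma conj_conj_hasDerivAt_s9 {f : ℂ → ℂ} {f' z : ℂ} (hf : HasDerivAt f f' z) :
    HasDerivAt (fun w => conj' (f (conj' w))) (conj' f') (conj' z) := by
  rw [hasDerivAt_iff_tendsto_slope] at hf ⊢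
  have hslope : ∀ w : ℂ, slope (fun w => conj' (f (conj' w))) (conj' z) w
      = conj' (slope f z (conj' w)) := by
    intro w
    simp only [slope_def_field, div_eq_mul_inv, map_mul, map_inv₀, map_sub, Complex.conj_conj]
  have h1 : Tendsto conj' (𝓝[≠] (conj' z)) (𝓝[≠] z) := by
    have : Tendsto conj' (𝓝 (conj' z)) (𝓝 z) := by
      simpa using (Complex.continuous_conj.tendsto (conj' z))
    refine tendsto_nhdsWithin_of_tendsto_nhds_of_eventually_within _ (this.mono_left nhdsWithin_le_nhds) ?_
    filter_upwards [self_mem_nhdsWithin] with w hw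
    simp only [mem_compl_iff, mem_singleton_iff] at hw ⊢
    intro h; apply hw; rw [← h, Complex.conj_conj]
  have h2 : Tendsto (fun w => conj' (slope f z (conj' w))) (𝓝[≠] (conj' z)) (𝓝 (conj' f')) :=
    (Complex.continuous_conj.tendsto f').comp (hf.comp h1)
  exact h2.congr fun w => (hslope w).symm


lemma differentiableAt_of_off_line {U : Set ℂ} (hU : IsOpen U) {F : ℂ → ℂ}
    (hFc : ContinuousOn F U)
    (hFd : ∀ w ∈ U, w.im ≠ 0 → DifferentiableAt ℂ F w) :
    ∀ z ∈ U, DifferentiableAt ℂ F z := by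
  intro z hz
  by_cases him : z.im ≠ 0
  · exact hFd z hz him
  push_neg at him
  obtain ⟨r, hr, hrU⟩ : ∃ r > 0, closedBall z r ⊆ U := by
    rcases Metric.isOpen_iff.1 hU z hz with ⟨ρ, hρ, hρU⟩
    exact ⟨ρ/2, by linarith, (closedBall_subset_ball (by linarith)).trans hρU⟩
  set a : ℝ := r / 2 with ha
  have ha0 : 0 < a := by positivity
  set x₀ : ℝ := z.re with hx₀
  set Qc : Set ℂ := Icc (x₀ - a) (x₀ + a) ×ℂ Icc (-a) a with hQc
  set Qo : Set ℂ := Ioo (x₀ - a) (x₀ + a) ×ℂ Ioo (-a) a with hQo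
  have hQcU : Qc ⊆ U := by
    intro p hp
    rw [mem_reProdIm] at hp
    apply hrU
    rw [mem_closedBall, Complex.dist_eq]
    calc ‖p - z‖ ≤ |(p - z).re| + |(p - z).im| := Complex.norm_le_abs_re_add_abs_im _
    _ ≤ a + a := by
        rw [Complex.sub_re, Complex.sub_im, him, sub_zero]
        gcongr
        · rw [abs_le]; constructor <;> [linarith [hp.1.1]; linarith [hp.1.2]]
        · rw [abs_le]; exact ⟨hp.2.1, hp.2.2⟩
    _ = r := by rw [ha]; ring
  have hQoQc : Qo ⊆ Qc := fun p hp => by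
    rw [mem_reProdIm] at hp ⊢
    exact ⟨Ioo_subset_Icc_self hp.1, Ioo_subset_Icc_self hp.2⟩
  have hQoopen : IsOpen Qo := isOpen_Ioo.reProdIm isOpen_Ioo
  have hzQo : z ∈ Qo := by
    rw [mem_reProdIm, him]
    exact ⟨⟨by linarith, by linarith⟩, ⟨by linarith, ha0⟩⟩
  -- the primitive
  set g : ℂ → ℂ := fun p =>
    (∫ t : ℝ in x₀..p.re, F t) + I • ∫ s : ℝ in (0:ℝ)..p.im, F (p.re + s * I) with hg
  -- continuity facts for integrands
  have hmemQc : ∀ (t s : ℝ), t ∈ Icc (x₀ - a) (x₀ + a) → s ∈ Icc (-a) a →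
      ((t:ℂ) + s * I) ∈ U := by
    intro t s ht hs
    apply hQcU
    rw [mem_reProdIm]
    have h1 : ((t:ℂ) + s * I).re = t := by simp
    have h2 : ((t:ℂ) + s * I).im = s := by simp
    rw [h1, h2]
    exact ⟨ht, hs⟩
  have hint_horiz : ∀ (s : ℝ) (t₁ t₂ : ℝ), s ∈ Icc (-a) a → t₁ ∈ Icc (x₀ - a) (x₀ + a) →
      t₂ ∈ Icc (x₀ - a) (x₀ + a) →
      IntervalIntegrable (fun t : ℝ => F ((t:ℂ) + s * I)) MeasureTheory.volume t₁ t₂ := by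
    intro s t₁ t₂ hs ht₁ ht₂
    apply ContinuousOn.intervalIntegrable
    apply hFc.comp (by fun_prop : Continuous fun t : ℝ => (t:ℂ) + s * I).continuousOn
    intro t ht
    exact hmemQc t s (uIcc_subset_Icc ht₁ ht₂ ht) hs
  have hint_vert : ∀ (t : ℝ) (s₁ s₂ : ℝ), t ∈ Icc (x₀ - a) (x₀ + a) → s₁ ∈ Icc (-a) a →
      s₂ ∈ Icc (-a) a →
      IntervalIntegrable (fun s : ℝ => F ((t:ℂ) + s * I)) MeasureTheory.volume s₁ s₂ := by
    intro t s₁ s₂ ht hs₁ hs₂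
    apply ContinuousOn.intervalIntegrable
    apply hFc.comp (by fun_prop : Continuous fun s : ℝ => (t:ℂ) + s * I).continuousOn
    intro s hs
    exact hmemQc t s ht (uIcc_subset_Icc hs₁ hs₂ hs)
  -- main step: g is a primitive of F on Qo
  have key : ∀ p ∈ Qo, HasDerivAt g (F p) p := by
    intro p hp
    have hpQo := hp
    rw [mem_reProdIm] at hpQo
    obtain ⟨hx, hy⟩ := hpQo
    have hpU : U ∈ 𝓝 p := hU.mem_nhds (hQcU (hQoQc hp))
    have hcp : ContinuousAt F p := hFc.continuousAt hpU
    rw [hasDerivAt_iff_isLittleO_nhds_zero, Asymptotics.isLittleO_iff]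
    intro ε hε
    obtain ⟨δ₁, hδ₁0, hδ₁⟩ := Metric.continuousAt_iff.1 hcp (ε/2) (by positivity)
    obtain ⟨δ₂, hδ₂0, hδ₂⟩ := Metric.isOpen_iff.1 hQoopen p hp
    have hδ0 : 0 < min (δ₁/2) δ₂ := by positivity
    filter_upwards [Metric.ball_mem_nhds 0 hδ0] with k hk
    rw [mem_ball, dist_zero_right] at hk
    have hknorm₁ : ‖k‖ < δ₁/2 := lt_of_lt_of_le hk (min_le_left _ _)
    have hknorm₂ : ‖k‖ < δ₂ := lt_of_lt_of_le hk (min_le_right _ _)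
    have hpk : p + k ∈ Qo := by
      apply hδ₂
      rw [mem_ball, dist_eq_norm]
      simpa using hknorm₂
    have hpkQo := hpk
    rw [mem_reProdIm, Complex.add_re, Complex.add_im] at hpkQo
    obtain ⟨hxh, hyl⟩ := hpkQo
    set x : ℝ := p.re
    set y : ℝ := p.im
    set h : ℝ := k.re
    set l : ℝ := k.im
    -- rectangle theorem
    have hrect : (∫ t : ℝ in x..(x+h), F t) - (∫ t : ℝ in x..(x+h), F (t + y * I)) +
        I • (∫ s : ℝ in (0:ℝ)..y, F ((x+h : ℝ) + s * I)) -
        I • (∫ s : ℝ in (0:ℝ)..y, F ((x:ℝ) + s * I)) = 0 := by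
      have hre : ((x:ℂ)).re = x := by simp
      have him0 : ((x:ℂ)).im = 0 := by simp
      have hw₁re : ((x + h : ℝ) + (y:ℝ) * I : ℂ).re = x + h := by simp
      have hw₁im : ((x + h : ℝ) + (y:ℝ) * I : ℂ).im = y := by simp
      have := Complex.integral_boundary_rect_eq_zero_of_continuousOn_of_differentiableOn F
        (x : ℂ) ((x + h : ℝ) + (y:ℝ) * I) ?_ ?_
      · rw [hre, him0, hw₁re, hw₁im] at this
        simpa using this
      · apply hFc.mono
        intro q hq
        rw [hre, him0, hw₁re, hw₁im, mem_reProdIm] at hq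
        apply hQcU
        rw [mem_reProdIm]
        constructor
        · exact uIcc_subset_Icc (Ioo_subset_Icc_self hx) (Ioo_subset_Icc_self hxh) hq.1
        · exact uIcc_subset_Icc ⟨by linarith [ha0], le_of_lt ha0⟩ (Ioo_subset_Icc_self hy) hq.2
      · intro q hq
        rw [hre, him0, hw₁re, hw₁im, mem_reProdIm] at hq
        have hqim : q.im ≠ 0 := by
          intro h0
          rw [h0] at hq
          have h1 := hq.2.1
          have h2 := hq.2.2
          rcases le_or_gt y 0 with hy0 | hy0
          · rw [max_eq_left hy0] at h2; exact absurd h2 (lt_irrefl 0)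
          · rw [min_eq_left hy0.le] at h1; exact absurd h1 (lt_irrefl 0)
        have hqU : q ∈ U := by
          apply hQcU
          rw [mem_reProdIm]
          constructor
          · apply uIcc_subset_Icc (Ioo_subset_Icc_self hx) (Ioo_subset_Icc_self hxh)
            exact Ioo_subset_Icc_self hq.1  -- Ioo min max ⊆ Icc min max = uIcc
          · apply uIcc_subset_Icc ⟨by linarith [ha0], le_of_lt ha0⟩ (Ioo_subset_Icc_self hy)
            exact Ioo_subset_Icc_self hq.2
        exact (hFd q hqU hqim).differentiableWithinAt
    -- integrability
    have hIcx : x ∈ Icc (x₀ - a) (x₀ + a) := Ioo_subset_Icc_self hx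
    have hIcxh : x + h ∈ Icc (x₀ - a) (x₀ + a) := Ioo_subset_Icc_self hxh
    have hIcy : y ∈ Icc (-a) a := Ioo_subset_Icc_self hy
    have hIcyl : y + l ∈ Icc (-a) a := Ioo_subset_Icc_self hyl
    have hIc0 : (0:ℝ) ∈ Icc (-a) a := ⟨by linarith [ha0], le_of_lt ha0⟩
    have hIcx₀ : x₀ ∈ Icc (x₀ - a) (x₀ + a) := ⟨by linarith [ha0], by linarith [ha0]⟩
    have hint1 : IntervalIntegrable (fun t : ℝ => F t) MeasureTheory.volume x₀ x := by
      simpa using hint_horiz 0 x₀ x hIc0 hIcx₀ hIcx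
    have hint2 : IntervalIntegrable (fun t : ℝ => F t) MeasureTheory.volume x₀ (x+h) := by
      simpa using hint_horiz 0 x₀ (x+h) hIc0 hIcx₀ hIcxh
    have hint3 : IntervalIntegrable (fun s : ℝ => F ((x+h:ℝ) + s * I)) MeasureTheory.volume 0 y :=
      hint_vert (x+h) 0 y hIcxh hIc0 hIcy
    have hint4 : IntervalIntegrable (fun s : ℝ => F ((x+h:ℝ) + s * I)) MeasureTheory.volume y (y+l) :=
      hint_vert (x+h) y (y+l) hIcxh hIcy hIcyl
    have hint5 : IntervalIntegrable (fun t : ℝ => F ((t:ℝ) + y * I)) MeasureTheory.volume x (x+h) :=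
      hint_horiz y x (x+h) hIcy hIcx hIcxh
    -- splitting identities
    have E1 : (∫ t : ℝ in x₀..(x+h), F t) - ∫ t : ℝ in x₀..x, F t
        = ∫ t : ℝ in x..(x+h), F t :=
      intervalIntegral.integral_interval_sub_left hint2 hint1
    have E3 : (∫ s : ℝ in (0:ℝ)..(y+l), F ((x+h:ℝ) + s * I))
        = (∫ s : ℝ in (0:ℝ)..y, F ((x+h:ℝ) + s * I))
          + ∫ s : ℝ in y..(y+l), F ((x+h:ℝ) + s * I) :=
      (intervalIntegral.integral_add_adjacent_intervals hint3 hint4).symm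
    -- difference of g
    have hgdiff : g (p + k) - g p
        = (∫ t : ℝ in x..(x+h), F ((t:ℝ) + y * I))
          + I • ∫ s : ℝ in y..(y+l), F ((x+h:ℝ) + s * I) := by
      have hgp : g p = (∫ t : ℝ in x₀..x, F t) + I • ∫ s : ℝ in (0:ℝ)..y, F ((x:ℝ) + s * I) := rfl
      have hgpk : g (p + k) = (∫ t : ℝ in x₀..(x+h), F t)
          + I • ∫ s : ℝ in (0:ℝ)..(y+l), F ((x+h:ℝ) + s * I) := by
        rw [hg]
        simp only [Complex.add_re, Complex.add_im]
        rfl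
      rw [hgp, hgpk, E3]
      simp only [smul_eq_mul] at hrect ⊢
      linear_combination E1 + hrect
    -- subtract the constant
    have hconstsub : g (p + k) - g p - k • F p
        = (∫ t : ℝ in x..(x+h), (F ((t:ℝ) + y * I) - F p))
          + I • ∫ s : ℝ in y..(y+l), (F ((x+h:ℝ) + s * I) - F p) := by
      rw [intervalIntegral.integral_sub hint5 intervalIntegrable_const,
        intervalIntegral.integral_sub hint4 intervalIntegrable_const,
        intervalIntegral.integral_const, intervalIntegral.integral_const, hgdiff]
      have hk' : k = (h:ℂ) + (l:ℂ) * I := (Complex.re_add_im k).symm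
      rw [hk']
      simp only [smul_eq_mul, Complex.real_smul, Complex.ofReal_sub]
      push_cast
      ring
    rw [hconstsub]
    -- bounds
    have hb1 : ‖∫ t : ℝ in x..(x+h), (F ((t:ℝ) + y * I) - F p)‖ ≤ ε/2 * |h| := by
      have := intervalIntegral.norm_integral_le_of_norm_le_const
        (a := x) (b := x+h) (C := ε/2) (f := fun t : ℝ => F ((t:ℝ) + y * I) - F p) ?_
      · simpa using this
      · intro t ht
        have htx : |t - x| ≤ |h| := by
          have h2 : t ∈ Set.uIcc x (x+h) := Set.uIoc_subset_uIcc ht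
          rw [Set.mem_uIcc] at h2
          rw [abs_le]
          rcases h2 with h2 | h2
          · constructor
            · linarith [abs_nonneg h, h2.1]
            · linarith [le_abs_self h, h2.2]
          · constructor
            · linarith [neg_abs_le h, h2.1]
            · linarith [abs_nonneg h, h2.2]
        have hdist : dist ((t:ℂ) + y * I) p < δ₁ := by
          have heq : (t:ℂ) + y * I - p = ((t - x : ℝ) : ℂ) := by
            rw [← Complex.re_add_im p]
            push_cast
            ring
          rw [dist_eq_norm, heq]
          rw [show ‖((t - x : ℝ):ℂ)‖ = |t - x| by rw [Complex.norm_real, Real.norm_eq_abs]]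
          calc |t - x| ≤ |h| := htx
          _ ≤ ‖k‖ := Complex.abs_re_le_norm k
          _ < δ₁ := by linarith
        have := hδ₁ hdist
        rw [dist_eq_norm] at this
        linarith
    have hb2 : ‖∫ s : ℝ in y..(y+l), (F ((x+h:ℝ) + s * I) - F p)‖ ≤ ε/2 * |l| := by
      have := intervalIntegral.norm_integral_le_of_norm_le_const
        (a := y) (b := y+l) (C := ε/2) (f := fun s : ℝ => F ((x+h:ℝ) + s * I) - F p) ?_
      · simpa using this
      · intro s hs
        have hsy : |s - y| ≤ |l| := by
          have h2 : s ∈ Set.uIcc y (y+l) := Set.uIoc_subset_uIcc hs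
          rw [Set.mem_uIcc] at h2
          rw [abs_le]
          rcases h2 with h2 | h2
          · constructor
            · linarith [abs_nonneg l, h2.1]
            · linarith [le_abs_self l, h2.2]
          · constructor
            · linarith [neg_abs_le l, h2.1]
            · linarith [abs_nonneg l, h2.2]
        have hdist : dist ((x+h:ℝ) + (s:ℝ) * I) p < δ₁ := by
          have heq : ((x+h:ℝ):ℂ) + (s:ℝ) * I - p = ((h:ℝ):ℂ) + ((s - y : ℝ):ℂ) * I := by
            rw [← Complex.re_add_im p]
            push_cast
            ring
          rw [dist_eq_norm, heq]
          calc ‖((h:ℝ):ℂ) + ((s - y : ℝ):ℂ) * I‖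
              ≤ |(((h:ℝ):ℂ) + ((s - y : ℝ):ℂ) * I).re| + |(((h:ℝ):ℂ) + ((s - y : ℝ):ℂ) * I).im| :=
                Complex.norm_le_abs_re_add_abs_im _
          _ = |h| + |s - y| := by norm_num
          _ ≤ ‖k‖ + ‖k‖ := by
              have h1 : |h| ≤ ‖k‖ := Complex.abs_re_le_norm k
              have h2 : |l| ≤ ‖k‖ := Complex.abs_im_le_norm k
              gcongr
              linarith
          _ < δ₁ := by linarith
        have := hδ₁ hdist
        rw [dist_eq_norm] at this
        linarith
    calc ‖(∫ t : ℝ in x..(x+h), (F ((t:ℝ) + y * I) - F p))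
          + I • ∫ s : ℝ in y..(y+l), (F ((x+h:ℝ) + s * I) - F p)‖
        ≤ ‖∫ t : ℝ in x..(x+h), (F ((t:ℝ) + y * I) - F p)‖
          + ‖I • ∫ s : ℝ in y..(y+l), (F ((x+h:ℝ) + s * I) - F p)‖ := norm_add_le _ _
    _ ≤ ε/2 * |h| + ε/2 * |l| := by
        rw [norm_smul, Complex.norm_I, one_mul]
        exact add_le_add hb1 hb2
    _ ≤ ε/2 * ‖k‖ + ε/2 * ‖k‖ := by
        have h1 : |h| ≤ ‖k‖ := Complex.abs_re_le_norm k
        have h2 : |l| ≤ ‖k‖ := Complex.abs_im_le_norm k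
        gcongr <;> linarith
    _ = ε * ‖k‖ := by ring
  -- conclude
  have hgd : DifferentiableOn ℂ g Qo := fun q hq => (key q hq).differentiableAt.differentiableWithinAt
  have hga : AnalyticOnNhd ℂ g Qo := hgd.analyticOnNhd hQoopen
  have hderiv : AnalyticOnNhd ℂ (deriv g) Qo := hga.deriv_of_isOpen hQoopen
  apply (hderiv z hzQo).differentiableAt.congr_of_eventuallyEq
  filter_upwards [hQoopen.mem_nhds hzQo] with q hq
  exact ((key q hq).deriv).symm

theorem fiber_discrete_in_arc (f : ℂ → ℂ) (J : Set ℂ)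
    (hfc : ContinuousOn f (Metric.closedBall (0:ℂ) 1))
    (hfd : DifferentiableOn ℂ f (Metric.ball (0:ℂ) 1))
    (hfnc : ¬ ∃ c : ℂ, ∀ z ∈ Metric.ball (0:ℂ) 1, f z = c)
    (hJs : J ⊆ Metric.sphere (0:ℂ) 1) (hJconn : IsConnected J)
    (hJopen : ∃ V : Set ℂ, IsOpen V ∧ J = Metric.sphere (0:ℂ) 1 ∩ V)
    (hmod : ∀ ζ ∈ J, ‖f ζ‖ = 1) :
    ∀ ξ ∈ Metric.sphere (0:ℂ) 1, ∀ z ∈ J,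
      ∃ V : Set ℂ, IsOpen V ∧ z ∈ V ∧
        Set.Subsingleton (f ⁻¹' {ξ} ∩ J ∩ V) := by
  intro ξ hξ z₀ hz₀
  by_contra hcon
  push_neg at hcon
  -- z₀ is a cluster point of the fiber
  have hfreq : ∃ᶠ w in 𝓝[≠] z₀, f w = ξ ∧ w ∈ J := by
    rw [frequently_iff]
    intro U hU
    rw [mem_nhdsWithin] at hU
    obtain ⟨T, hTopen, hzT, hTsub⟩ := hU
    have hns := hcon T hTopen hzT
    obtain ⟨a, ha, b, hb, hab⟩ := hns
    obtain ⟨⟨haξ, haJ⟩, haT⟩ := ha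
    obtain ⟨⟨hbξ, hbJ⟩, hbT⟩ := hb
    rcases eq_or_ne a z₀ with rfl | haz
    · refine ⟨b, hTsub ⟨hbT, ?_⟩, by simpa using hbξ, hbJ⟩
      simpa using hab.symm
    · exact ⟨a, hTsub ⟨haT, by simpa using haz⟩, by simpa using haξ, haJ⟩
  -- basic facts about z₀
  have hz₀s : ‖z₀‖ = 1 := by
    have := hJs hz₀
    rwa [mem_sphere_iff_norm, sub_zero] at this
  have hz₀cb : z₀ ∈ Metric.closedBall (0:ℂ) 1 := by
    rw [mem_closedBall_iff_norm, sub_zero, hz₀s]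
  obtain ⟨V, hVopen, hJV⟩ := hJopen
  have hz₀V : z₀ ∈ V := by rw [hJV] at hz₀; exact hz₀.2
  -- choose ε₁ : f ≠ 0 nearby in the closed ball
  have hfz₀ : ‖f z₀‖ = 1 := hmod z₀ hz₀
  obtain ⟨ε₁, hε₁0, hε₁⟩ : ∃ ε₁ > 0, ∀ w ∈ Metric.closedBall (0:ℂ) 1,
      dist w z₀ < ε₁ → f w ≠ 0 := by
    have hcw : ContinuousWithinAt f (Metric.closedBall (0:ℂ) 1) z₀ := hfc z₀ hz₀cb
    rw [Metric.continuousWithinAt_iff] at hcw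
    obtain ⟨δ, hδ0, hδ⟩ := hcw (1/2) (by norm_num)
    refine ⟨δ, hδ0, fun w hw hd h0 => ?_⟩
    have := hδ hw hd
    rw [h0, dist_zero_left, hfz₀] at this
    norm_num at this
  obtain ⟨ε₂, hε₂0, hε₂⟩ : ∃ ε₂ > 0, Metric.ball z₀ ε₂ ⊆ V :=
    Metric.isOpen_iff.1 hVopen z₀ hz₀V
  -- inversion map
  have hinvconj : ∀ v : ℂ, ‖v‖ = 1 → (conj' v)⁻¹ = v := by
    intro v hv
    apply inv_eq_of_mul_eq_one_right
    rw [mul_comm, Complex.mul_conj]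
    norm_cast
    rw [← Complex.sq_norm, hv]; norm_num
  set ρ : ℂ → ℂ := fun w => (conj' w)⁻¹ with hρ
  have hρz₀ : ρ z₀ = z₀ := hinvconj z₀ hz₀s
  have hρcont : ContinuousAt ρ z₀ := by
    apply ContinuousAt.inv₀
    · exact Complex.continuous_conj.continuousAt
    · intro h0
      have : z₀ = 0 := by
        have := congrArg conj' h0
        simpa using this
      rw [this] at hz₀s; simp at hz₀s
  -- choose δ
  obtain ⟨δ', hδ'0, hδ'⟩ : ∃ δ' > 0, ∀ w, dist w z₀ < δ' →
      dist (ρ w) z₀ < min ε₁ ε₂ := by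
    rw [Metric.continuousAt_iff] at hρcont
    obtain ⟨δ', hδ'0, hδ'⟩ := hρcont (min ε₁ ε₂) (by positivity)
    exact ⟨δ', hδ'0, fun w hw => by rw [← hρz₀]; exact hδ' hw⟩
  set δ : ℝ := min (min δ' (1/2)) (min ε₁ ε₂) with hδdef
  have hδ0 : 0 < δ := by positivity
  set W : Set ℂ := Metric.ball z₀ δ with hW
  have hz₀W : z₀ ∈ W := mem_ball_self hδ0
  -- basic W facts
  have hWne : ∀ w ∈ W, w ≠ 0 := by
    intro w hw h0
    rw [hW, mem_ball, h0, dist_zero_left, hz₀s] at hw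
    have : δ ≤ 1/2 := le_trans (min_le_left _ _) (min_le_right _ _)
    linarith
  have hWsphereJ : ∀ w ∈ W, ‖w‖ = 1 → w ∈ J := by
    intro w hw habs
    rw [hJV]
    constructor
    · rw [mem_sphere_iff_norm, sub_zero, habs]
    · apply hε₂
      rw [mem_ball]
      exact lt_of_lt_of_le hw (le_trans (min_le_right _ _) (min_le_right _ _))
  have hWρ : ∀ w ∈ W, dist (ρ w) z₀ < min ε₁ ε₂ := by
    intro w hw
    exact hδ' w (lt_of_lt_of_le hw (le_trans (min_le_left _ _) (min_le_left _ _)))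
  have hWf : ∀ w ∈ W, ‖w‖ ≤ 1 → f w ≠ 0 := by
    intro w hw h1
    apply hε₁ w
    · rw [mem_closedBall_iff_norm, sub_zero]; exact h1
    · exact lt_of_lt_of_le hw (le_trans (min_le_right _ _) (min_le_left _ _))
  have hWρf : ∀ w ∈ W, 1 ≤ ‖w‖ → f (ρ w) ≠ 0 := by
    intro w hw h1
    apply hε₁ (ρ w)
    · rw [mem_closedBall_iff_norm, sub_zero, hρ]
      rw [norm_inv, Complex.norm_conj]
      exact inv_le_one_of_one_le₀ h1
    · exact lt_of_lt_of_le (hWρ w hw) (min_le_left _ _)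
  have hWρball : ∀ w ∈ W, 1 < ‖w‖ → ρ w ∈ Metric.ball (0:ℂ) 1 := by
    intro w hw h1
    rw [mem_ball_iff_norm, sub_zero, hρ, norm_inv, Complex.norm_conj]
    exact inv_lt_one_of_one_lt₀ h1
  -- the reflected function
  set Gp : ℂ → ℂ := fun w => (conj' (f (ρ w)))⁻¹ with hGp
  set F : ℂ → ℂ := fun w => if ‖w‖ ≤ 1 then f w else Gp w with hF
  have hFin : ∀ w, ‖w‖ ≤ 1 → F w = f w := fun w h => if_pos h
  have hsphere_eq : ∀ w ∈ W, ‖w‖ = 1 → Gp w = f w := by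
    intro w hw habs
    have hwJ : w ∈ J := hWsphereJ w hw habs
    have hfw : ‖f w‖ = 1 := hmod w hwJ
    show (conj' (f (ρ w)))⁻¹ = f w
    rw [show ρ w = w from hinvconj w habs]
    exact hinvconj (f w) hfw
  have hFout : ∀ w ∈ W, 1 ≤ ‖w‖ → F w = Gp w := by
    intro w hw h1
    rcases lt_or_eq_of_le h1 with h1' | h1'
    · rw [hF]; simp only
      rw [if_neg (by linarith)]
    · rw [hFin w h1'.symm.le, hsphere_eq w hw h1'.symm]
  -- continuity of F on W
  -- continuity helpers
  have hρca : ∀ v : ℂ, v ≠ 0 → ContinuousAt ρ v := by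
    intro v hv
    apply ContinuousAt.inv₀ Complex.continuous_conj.continuousAt
    intro h0
    apply hv
    have := congrArg conj' h0
    simpa using this
  have hfball : ∀ v ∈ Metric.ball (0:ℂ) 1, ContinuousAt f v := fun v hv =>
    (hfc.mono ball_subset_closedBall).continuousAt (isOpen_ball.mem_nhds hv)
  have hballabs : ∀ v : ℂ, ‖v‖ < 1 → v ∈ Metric.ball (0:ℂ) 1 := by
    intro v hv
    rw [mem_ball_iff_norm, sub_zero]; exact hv
  have hopengt : IsOpen {v : ℂ | 1 < ‖v‖} :=
    isOpen_lt continuous_const continuous_norm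
  have hGpca : ∀ w ∈ W, 1 < ‖w‖ → ContinuousAt Gp w := by
    intro w hw h1
    have hfr : ContinuousAt f (ρ w) := hfball _ (hWρball w hw h1)
    have hne : conj' (f (ρ w)) ≠ 0 := by
      simpa using hWρf w hw h1.le
    have h1' : ContinuousAt (f ∘ ρ) w := hfr.comp (hρca w (hWne w hw))
    have h2 : ContinuousAt (⇑conj' ∘ (f ∘ ρ)) w :=
      ContinuousAt.comp (g := ⇑conj') (f := f ∘ ρ) (x := w)
        Complex.continuous_conj.continuousAt h1'
    exact ContinuousAt.comp (g := Inv.inv) (f := ⇑conj' ∘ (f ∘ ρ)) (x := w)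
      (continuousAt_inv₀ hne) h2
  have hFca : ∀ w ∈ W, ContinuousAt F w := by
    intro w hw
    rcases lt_trichotomy (‖w‖) 1 with h1 | h1 | h1
    · have hwb := hballabs w h1
      apply (hfball w hwb).congr
      filter_upwards [isOpen_ball.mem_nhds hwb] with v hv
      have : ‖v‖ < 1 := by
        rwa [mem_ball_iff_norm, sub_zero] at hv
      exact (hFin v this.le).symm
    · -- on the sphere
      have hwcb : w ∈ Metric.closedBall (0:ℂ) 1 := by
        rw [mem_closedBall_iff_norm, sub_zero, h1]
      have hcw1 : ContinuousWithinAt F {v : ℂ | ‖v‖ ≤ 1} w := by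
        have hsetle : {v : ℂ | ‖v‖ ≤ 1} = Metric.closedBall (0:ℂ) 1 := by
          ext v
          rw [mem_setOf_eq, mem_closedBall_iff_norm, sub_zero]
        refine ContinuousWithinAt.congr ?_ (fun v hv => hFin v hv) (hFin w h1.le)
        rw [hsetle]
        exact hfc w hwcb
      have hcw2 : ContinuousWithinAt F {v : ℂ | 1 ≤ ‖v‖} w := by
        rw [← continuousWithinAt_inter (isOpen_ball.mem_nhds hw)]
        have hρw : ρ w = w := hinvconj w h1
        have hmaps : MapsTo ρ ({v : ℂ | 1 ≤ ‖v‖} ∩ W) (Metric.closedBall (0:ℂ) 1) := by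
          intro v hv
          rw [mem_closedBall_iff_norm, sub_zero]
          show ‖(conj' v)⁻¹‖ ≤ 1
          rw [norm_inv, Complex.norm_conj]
          exact inv_le_one_of_one_le₀ hv.1
        have hfCW : ContinuousWithinAt f (Metric.closedBall (0:ℂ) 1) (ρ w) := by
          rw [hρw]; exact hfc w hwcb
        have hρCW : ContinuousWithinAt ρ ({v : ℂ | 1 ≤ ‖v‖} ∩ W) w :=
          (hρca w (hWne w hw)).continuousWithinAt
        have hGpCW : ContinuousWithinAt Gp ({v : ℂ | 1 ≤ ‖v‖} ∩ W) w := by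
          have hfρ : ContinuousWithinAt (fun v => f (ρ v)) ({v : ℂ | 1 ≤ ‖v‖} ∩ W) w :=
            hfCW.comp hρCW hmaps
          have hne : conj' (f (ρ w)) ≠ 0 := by
            rw [hρw]
            have : f w ≠ 0 := by
              intro h0
              have := hmod w (hWsphereJ w hw h1)
              rw [h0] at this; simp at this
            simpa using this
          have h2 : ContinuousWithinAt (⇑conj' ∘ fun v => f (ρ v))
              ({v : ℂ | 1 ≤ ‖v‖} ∩ W) w :=
            ContinuousAt.comp_continuousWithinAt (g := ⇑conj') (f := fun v => f (ρ v)) (x := w)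
              Complex.continuous_conj.continuousAt hfρ
          exact ContinuousAt.comp_continuousWithinAt (g := Inv.inv)
            (f := ⇑conj' ∘ fun v => f (ρ v)) (x := w) (continuousAt_inv₀ hne) h2
        exact hGpCW.congr (fun v hv => hFout v hv.2 hv.1) (hFout w hw h1.ge)
      have hunion : ContinuousWithinAt F
          ({v : ℂ | ‖v‖ ≤ 1} ∪ {v : ℂ | 1 ≤ ‖v‖}) w := hcw1.union hcw2
      have huniv : ({v : ℂ | ‖v‖ ≤ 1} ∪ {v : ℂ | 1 ≤ ‖v‖}) = univ := by
        ext v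
        simp only [mem_union, mem_setOf_eq, mem_univ, iff_true]
        exact le_total _ _
      rwa [huniv, continuousWithinAt_univ] at hunion
    · apply (hGpca w hw h1).congr
      filter_upwards [(hopengt.inter isOpen_ball).mem_nhds ⟨h1, hw⟩] with v hv
      exact (hFout v hv.2 hv.1.le).symm
  -- differentiability of F off the sphere
  have hFdoff : ∀ w ∈ W, ‖w‖ ≠ 1 → DifferentiableAt ℂ F w := by
    intro w hw h1
    rcases lt_or_gt_of_ne h1 with h1 | h1
    · have hwb := hballabs w h1
      have hdf : DifferentiableAt ℂ f w :=
        (hfd w hwb).differentiableAt (isOpen_ball.mem_nhds hwb)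
      apply hdf.congr_of_eventuallyEq
      filter_upwards [isOpen_ball.mem_nhds hwb] with v hv
      exact hFin v (le_of_lt (by rwa [mem_ball_iff_norm, sub_zero] at hv))
    · have hρwb : ρ w ∈ Metric.ball (0:ℂ) 1 := hWρball w hw h1
      have hdfρ : DifferentiableAt ℂ f (ρ w) :=
        (hfd (ρ w) hρwb).differentiableAt (isOpen_ball.mem_nhds hρwb)
      have hcc : HasDerivAt (fun v => conj' (f (conj' v))) (conj' (deriv f (ρ w)))
          (conj' (ρ w)) := conj_conj_hasDerivAt_s9 hdfρ.hasDerivAt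
      have hpt : conj' (ρ w) = w⁻¹ := by
        show conj' ((conj' w)⁻¹) = w⁻¹
        rw [map_inv₀, Complex.conj_conj]
      rw [hpt] at hcc
      have hdcc : DifferentiableAt ℂ (fun v => conj' (f (conj' v))) w⁻¹ := hcc.differentiableAt
      have hinv : DifferentiableAt ℂ (fun v : ℂ => v⁻¹) w := differentiableAt_inv (hWne w hw)
      have hcomp : DifferentiableAt ℂ ((fun v => conj' (f (conj' v))) ∘ (fun v : ℂ => v⁻¹)) w :=
        DifferentiableAt.comp w hdcc hinv
      have hne : ((fun v => conj' (f (conj' v))) ∘ (fun v : ℂ => v⁻¹)) w ≠ 0 := by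
        show conj' (f (conj' (w⁻¹))) ≠ 0
        rw [map_inv₀]
        have : f (ρ w) ≠ 0 := hWρf w hw h1.le
        simpa using this
      have hlast := hcomp.inv hne
      have hdGp : DifferentiableAt ℂ Gp w := by
        have hGeq : Gp = fun v => (((fun u => conj' (f (conj' u))) ∘ (fun u : ℂ => u⁻¹)) v)⁻¹ := by
          funext v
          show (conj' (f ((conj' v)⁻¹)))⁻¹ = (conj' (f (conj' (v⁻¹))))⁻¹
          rw [map_inv₀]
        rw [hGeq]
        exact hlast
      apply hdGp.congr_of_eventuallyEq
      filter_upwards [(hopengt.inter isOpen_ball).mem_nhds ⟨h1, hw⟩] with v hv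
      exact hFout v hv.2 hv.1.le
  -- differentiability of F on the sphere
  have hFdon : ∀ w ∈ W, ‖w‖ = 1 → DifferentiableAt ℂ F w := by
    intro w₁ hw₁ h1
    have hw₁0 : w₁ ≠ 0 := hWne w₁ hw₁
    set M : ℂ → ℂ := fun ζ => w₁ * (I - ζ) / (I + ζ) with hM
    set ψ : ℂ → ℂ := fun v => I * (w₁ - v) / (w₁ + v) with hψ
    have hM0 : M 0 = w₁ := by
      show w₁ * (I - 0) / (I + 0) = w₁
      rw [sub_zero, add_zero, mul_div_assoc, div_self Complex.I_ne_zero, mul_one]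
    have hMcont : ContinuousAt M 0 := by
      apply ContinuousAt.div (by fun_prop) (by fun_prop)
      simpa using Complex.I_ne_zero
    obtain ⟨εW, hεW0, hεWsub⟩ : ∃ εW > 0, Metric.ball w₁ εW ⊆ W :=
      Metric.isOpen_iff.1 isOpen_ball w₁ hw₁
    obtain ⟨η₀, hη₀0, hη₀⟩ := Metric.continuousAt_iff.1 hMcont εW hεW0
    set η : ℝ := min η₀ (1/2) with hηdef
    have hη0 : 0 < η := by positivity
    have hMW : ∀ ζ : ℂ, ‖ζ‖ < η → M ζ ∈ W := by
      intro ζ hζ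
      apply hεWsub
      rw [mem_ball, ← hM0]
      apply hη₀
      rw [dist_zero_right]
      exact lt_of_lt_of_le hζ (min_le_left _ _)
    have hIζne : ∀ ζ : ℂ, ‖ζ‖ < η → I + ζ ≠ 0 := by
      intro ζ hζ h0
      have hζI : ζ = -I := by linear_combination h0
      rw [hζI] at hζ
      simp only [norm_neg, Complex.norm_I] at hζ
      have : η ≤ 1/2 := min_le_right _ _
      linarith
    have hballη : ∀ ζ : ℂ, ζ ∈ Metric.ball (0:ℂ) η → ‖ζ‖ < η := by
      intro ζ hζ
      rwa [mem_ball_iff_norm, sub_zero] at hζ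
    -- F ∘ M on the small ball
    have hGc : ContinuousOn (F ∘ M) (Metric.ball (0:ℂ) η) := by
      intro ζ hζ
      have hζ' := hballη ζ hζ
      have hMd : ContinuousAt M ζ := by
        apply ContinuousAt.div (by fun_prop) (by fun_prop) (hIζne ζ hζ')
      exact ((hFca (M ζ) (hMW ζ hζ')).comp hMd).continuousWithinAt
    have hGd : ∀ ζ ∈ Metric.ball (0:ℂ) η, ζ.im ≠ 0 → DifferentiableAt ℂ (F ∘ M) ζ := by
      intro ζ hζ him
      have hζ' := hballη ζ hζ
      have hIζ := hIζne ζ hζ'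
      have hMζ1 : ‖M ζ‖ ≠ 1 := by
        intro habs
        rw [hM] at habs
        simp only [norm_div, norm_mul, h1, one_mul] at habs
        have habsne : ‖I + ζ‖ ≠ 0 := by
          simpa using hIζ
        have h2 : ‖I - ζ‖ = ‖I + ζ‖ := by
          field_simp at habs
          exact habs
        have h3 := congrArg (fun t : ℝ => t^2) h2
        simp only [Complex.sq_norm] at h3
        rw [Complex.normSq_apply, Complex.normSq_apply] at h3
        simp only [Complex.sub_re, Complex.sub_im, Complex.add_re, Complex.add_im,
          Complex.I_re, Complex.I_im] at h3
        apply him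
        nlinarith [h3]
      have hFdM : DifferentiableAt ℂ F (M ζ) := hFdoff _ (hMW ζ hζ') hMζ1
      have hMd : DifferentiableAt ℂ M ζ :=
        DifferentiableAt.div (by fun_prop) (by fun_prop) hIζ
      exact hFdM.comp ζ hMd
    have hdG0 : DifferentiableAt ℂ (F ∘ M) 0 :=
      differentiableAt_of_off_line isOpen_ball hGc hGd 0 (mem_ball_self hη0)
    -- pull back by ψ
    have hψw₁ : ψ w₁ = 0 := by
      show I * (w₁ - w₁) / (w₁ + w₁) = 0
      rw [sub_self, mul_zero, zero_div]
    have h2w₁ : w₁ + w₁ ≠ 0 := by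
      intro h0
      apply hw₁0
      have : (2:ℂ) * w₁ = 0 := by linear_combination h0
      simpa using this
    have hψd : DifferentiableAt ℂ ψ w₁ :=
      DifferentiableAt.div (by fun_prop) (by fun_prop) h2w₁
    have hdG0' : DifferentiableAt ℂ (F ∘ M) (ψ w₁) := by rw [hψw₁]; exact hdG0
    have hcomp : DifferentiableAt ℂ ((F ∘ M) ∘ ψ) w₁ := DifferentiableAt.comp w₁ hdG0' hψd
    apply hcomp.congr_of_eventuallyEq
    have hopenne : IsOpen {v : ℂ | w₁ + v ≠ 0} := by
      have heq : {v : ℂ | w₁ + v ≠ 0} = (fun v : ℂ => w₁ + v) ⁻¹' ({0}ᶜ) := rfl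
      rw [heq]
      exact IsOpen.preimage (by fun_prop) isOpen_compl_singleton
    filter_upwards [hopenne.mem_nhds (by simpa using h2w₁)] with v hv
    have hMψ : M (ψ v) = v := by
      have hden : w₁ + v ≠ 0 := hv
      have hIψ : I + ψ v = 2 * I * w₁ / (w₁ + v) := by
        show I + I * (w₁ - v) / (w₁ + v) = 2 * I * w₁ / (w₁ + v)
        field_simp
        ring
      have hIψ' : I - ψ v = 2 * I * v / (w₁ + v) := by
        show I - I * (w₁ - v) / (w₁ + v) = 2 * I * v / (w₁ + v)
        field_simp
        ring
      show w₁ * (I - ψ v) / (I + ψ v) = v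
      rw [hIψ, hIψ']
      have h2Iw : 2 * I * w₁ / (w₁ + v) ≠ 0 := by
        apply div_ne_zero _ hden
        simp [Complex.I_ne_zero, hw₁0]
      field_simp
    show F v = ((F ∘ M) ∘ ψ) v
    rw [Function.comp_apply, Function.comp_apply, hMψ]
  -- F is analytic on W
  have hFan : AnalyticOnNhd ℂ F W := by
    apply DifferentiableOn.analyticOnNhd _ isOpen_ball
    intro w hw
    rcases eq_or_ne (‖w‖) 1 with h1 | h1
    · exact (hFdon w hw h1).differentiableWithinAt
    · exact (hFdoff w hw h1).differentiableWithinAt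
  -- identity theorem on W
  have hFeqξ : EqOn F (fun _ => ξ) W := by
    apply hFan.eqOn_of_preconnected_of_frequently_eq analyticOnNhd_const
      (convex_ball z₀ δ).isPreconnected hz₀W
    apply hfreq.mono
    intro w hw
    have hws : ‖w‖ = 1 := by
      have := hJs hw.2
      rwa [mem_sphere_iff_norm, sub_zero] at this
    rw [hFin w hws.le, hw.1]
  -- transfer to the open disc
  have hq : (1 - δ/2 : ℝ) • z₀ ∈ W ∩ Metric.ball (0:ℂ) 1 := by
    have hδhalf : δ ≤ 1/2 := le_trans (min_le_left _ _) (min_le_right _ _)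
    have hz₀n : ‖z₀‖ = 1 := by rw [hz₀s]
    constructor
    · rw [hW, mem_ball, dist_eq_norm]
      have heq : (1 - δ/2 : ℝ) • z₀ - z₀ = (-(δ/2) : ℝ) • z₀ := by
        rw [Complex.real_smul, Complex.real_smul]; push_cast; ring
      rw [heq, norm_smul, hz₀n, mul_one, Real.norm_eq_abs, abs_of_nonpos (by linarith)]
      linarith
    · rw [mem_ball_iff_norm, sub_zero, norm_smul, hz₀n, mul_one,
        Real.norm_eq_abs, _root_.abs_of_nonneg (show (0:ℝ) ≤ 1 - δ/2 by linarith)]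
      linarith
  have hfan : AnalyticOnNhd ℂ f (Metric.ball (0:ℂ) 1) := hfd.analyticOnNhd isOpen_ball
  have hfeq : EqOn f (fun _ => ξ) (Metric.ball (0:ℂ) 1) := by
    apply hfan.eqOn_of_preconnected_of_eventuallyEq analyticOnNhd_const
      (convex_ball (0:ℂ) 1).isPreconnected hq.2
    have hmem : W ∩ Metric.ball (0:ℂ) 1 ∈ 𝓝 ((1 - δ/2 : ℝ) • z₀) :=
      (isOpen_ball.inter isOpen_ball).mem_nhds hq
    filter_upwards [hmem] with w hw
    have habs : ‖w‖ ≤ 1 := by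
      have := hw.2
      rw [mem_ball_iff_norm, sub_zero] at this
      linarith
    rw [← hFin w habs]
    exact hFeqξ hw.1
  exact hfnc ⟨ξ, fun w hw => hfeq hw⟩
end

section
/- Let f be holomorphic on an open connected set U containing an open arc J of the unit circle, with |f| < 1 on U ∩ Δ and |f| > 1 on U ∖ closure(Δ). Then f restricted to J is locally injective, i.e., every point of J has an open neighborhood in ℂ on which f is injective. -/
open Complex Filter Metric Set
open scoped Topology

private lemma abs_conv (x : ℂ) : (‖x‖ < 1 ↔ Complex.normSq x < 1)
    ∧ (1 < ‖x‖ ↔ 1 < Complex.normSq x) := by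
  have h1 : Complex.normSq x = (‖x‖) ^ 2 := Complex.normSq_eq_norm_sq x
  have h2 : 0 ≤ ‖x‖ := norm_nonneg x
  constructor <;> constructor <;> intro h <;> nlinarith

private lemma radial_sign (f : ℂ → ℂ) (U : Set ℂ) (hU : IsOpen U) (z : ℂ) (hzU : z ∈ U)
    (hz1 : ‖z‖ = 1)
    (hlt : ∀ w ∈ U, ‖w‖ < 1 → ‖f w‖ < 1)
    (hgt : ∀ w ∈ U, 1 < ‖w‖ → 1 < ‖f w‖)
    (hfz : ‖f z‖ = 1)
    (n : ℕ) (hn : 1 ≤ n) (h : ℂ → ℂ) (hh : ContinuousAt h z)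
    (heq : ∀ᶠ w in 𝓝 z, f w = f z + (w - z) ^ n * h w)
    (d : ℂ) (hd : ‖d‖ = 1) :
    (0 < d.re → 0 ≤ (f z * (starRingEnd ℂ) ((z * d) ^ n * h z)).re) ∧
    (d.re < 0 → (f z * (starRingEnd ℂ) ((z * d) ^ n * h z)).re ≤ 0) := by
  set w : ℝ → ℂ := fun t => z + (t : ℂ) * (z * d) with hw
  have hwc : Continuous w := by fun_prop
  have hw0 : w 0 = z := by simp [hw]
  have hwt : Tendsto w (𝓝 0) (𝓝 z) := by
    simpa [hw0] using hwc.tendsto 0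
  -- membership
  have hmem : ∀ᶠ t in 𝓝 (0 : ℝ), w t ∈ U := hwt.eventually (hU.eventually_mem hzU)
  -- normSq of w t
  have hz2 : Complex.normSq z = 1 := by rw [Complex.normSq_eq_norm_sq, hz1]; norm_num
  have hd2 : Complex.normSq d = 1 := by rw [Complex.normSq_eq_norm_sq, hd]; norm_num
  have hns : ∀ t : ℝ, Complex.normSq (w t) = 1 + t * (2 * d.re + t) := by
    intro t
    have hwt' : w t = z * (1 + (t : ℂ) * d) := by simp only [hw]; ring
    rw [hwt', Complex.normSq_mul, hz2, one_mul]
    simp only [Complex.normSq_apply, Complex.add_re, Complex.add_im, Complex.one_re,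
      Complex.one_im, Complex.mul_re, Complex.mul_im, Complex.ofReal_re, Complex.ofReal_im]
    simp only [Complex.normSq_apply] at hd2
    linear_combination (t * t) * hd2
  -- key identity
  set X : ℝ → ℂ := fun t => (z * d) ^ n * h (w t) with hX
  set q : ℝ → ℝ := fun t =>
    2 * (f z * (starRingEnd ℂ) (X t)).re + t ^ n * Complex.normSq (X t) with hq
  have hfz2 : Complex.normSq (f z) = 1 := by rw [Complex.normSq_eq_norm_sq, hfz]; norm_num
  have hkey : ∀ᶠ t in 𝓝 (0 : ℝ), Complex.normSq (f (w t)) - 1 = t ^ n * q t := by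
    filter_upwards [hwt.eventually heq] with t ht
    have hsub : w t - z = (t : ℂ) * (z * d) := by simp [hw]
    have e1 : f (w t) = f z + ((t ^ n : ℝ) : ℂ) * X t := by
      rw [ht, hsub]; simp only [hX]; push_cast; ring
    rw [e1, Complex.normSq_add, hfz2,
      show (starRingEnd ℂ) (((t ^ n : ℝ) : ℂ) * X t)
          = ((t ^ n : ℝ) : ℂ) * (starRingEnd ℂ) (X t) from by
        rw [map_mul, Complex.conj_ofReal],
      Complex.normSq_mul, Complex.normSq_ofReal,
      show f z * (((t ^ n : ℝ) : ℂ) * (starRingEnd ℂ) (X t))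
          = ((t ^ n : ℝ) : ℂ) * (f z * (starRingEnd ℂ) (X t)) from by ring,
      Complex.re_ofReal_mul]
    simp only [hq]
    ring
  -- limit of q
  have hqt : Tendsto q (𝓝 0) (𝓝 (2 * (f z * (starRingEnd ℂ) ((z * d) ^ n * h z)).re)) := by
    have hXc : Tendsto X (𝓝 0) (𝓝 ((z * d) ^ n * h z)) := by
      have h0 : Tendsto (fun t => h (w t)) (𝓝 0) (𝓝 (h z)) := hh.tendsto.comp hwt
      exact (tendsto_const_nhds (x := (z * d) ^ n)).mul h0
    have h1 : Tendsto (fun t => 2 * (f z * (starRingEnd ℂ) (X t)).re) (𝓝 0)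
        (𝓝 (2 * (f z * (starRingEnd ℂ) ((z * d) ^ n * h z)).re)) := by
      exact tendsto_const_nhds.mul ((Complex.continuous_re.tendsto _).comp
        (tendsto_const_nhds.mul ((Complex.continuous_conj.tendsto _).comp hXc)))
    have h2 : Tendsto (fun t : ℝ => t ^ n * Complex.normSq (X t)) (𝓝 0) (𝓝 0) := by
      have hpow : Tendsto (fun t : ℝ => t ^ n) (𝓝 0) (𝓝 0) := by
        have := (continuous_pow n (M := ℝ)).tendsto 0
        simpa [zero_pow (by omega : n ≠ 0)] using this
      have hnsX : Tendsto (fun t => Complex.normSq (X t)) (𝓝 0)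
          (𝓝 (Complex.normSq ((z * d) ^ n * h z))) :=
        (Complex.continuous_normSq.tendsto _).comp hXc
      have H := hpow.mul hnsX
      rw [zero_mul] at H; exact H
    have H := h1.add h2
    rw [add_zero] at H; exact H
  have hqt' : Tendsto q (𝓝[>] (0:ℝ)) (𝓝 (2 * (f z * (starRingEnd ℂ) ((z * d) ^ n * h z)).re)) :=
    hqt.mono_left nhdsWithin_le_nhds
  constructor
  · intro hdre
    have hpos : ∀ᶠ t in 𝓝[>] (0 : ℝ), 0 ≤ q t := by
      filter_upwards [eventually_nhdsWithin_of_eventually_nhds hmem,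
        eventually_nhdsWithin_of_eventually_nhds hkey, self_mem_nhdsWithin] with t htU htk htpos
      have ht0 : (0:ℝ) < t := htpos
      have h1 : 1 < Complex.normSq (w t) := by
        rw [hns t]; nlinarith [ht0, hdre]
      have h2 : 1 < ‖f (w t)‖ :=
        hgt _ htU ((abs_conv (w t)).2.mpr h1)
      have h3 : 0 < t ^ n * q t := by
        rw [← htk]; have := (abs_conv (f (w t))).2.mp h2; linarith
      nlinarith [pow_pos ht0 n]
    have := ge_of_tendsto hqt' hpos
    linarith
  · intro hdre
    have hIoo : Set.Ioo (0 : ℝ) (-(2 * d.re)) ∈ 𝓝[>] (0 : ℝ) :=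
      Ioo_mem_nhdsGT_of_mem ⟨le_refl 0, by linarith⟩
    have hpos : ∀ᶠ t in 𝓝[>] (0 : ℝ), q t ≤ 0 := by
      filter_upwards [eventually_nhdsWithin_of_eventually_nhds hmem,
        eventually_nhdsWithin_of_eventually_nhds hkey, hIoo] with t htU htk ht
      obtain ⟨ht0, ht1⟩ := ht
      have h1 : Complex.normSq (w t) < 1 := by
        rw [hns t]; nlinarith
      have h2 : ‖f (w t)‖ < 1 :=
        hlt _ htU ((abs_conv (w t)).1.mpr h1)
      have h3 : t ^ n * q t < 0 := by
        rw [← htk]; have := (abs_conv (f (w t))).1.mp h2; linarith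
      nlinarith [pow_pos ht0 n]
    have := le_of_tendsto hqt' hpos
    linarith

theorem locally_injective_of_modulus_separation (f : ℂ → ℂ) (J U : Set ℂ)
    (hJs : J ⊆ Metric.sphere (0:ℂ) 1) (hJconn : IsConnected J)
    (hJopen : ∃ V : Set ℂ, IsOpen V ∧ J = Metric.sphere (0:ℂ) 1 ∩ V)
    (hU : IsOpen U) (hUconn : IsConnected U) (hJU : J ⊆ U)
    (hf : DifferentiableOn ℂ f U)
    (hlt : ∀ w ∈ U ∩ Metric.ball (0:ℂ) 1, ‖f w‖ < 1)
    (hgt : ∀ w ∈ U \ Metric.closedBall (0:ℂ) 1, 1 < ‖f w‖) :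
    ∀ z ∈ J, ∃ V : Set ℂ, IsOpen V ∧ z ∈ V ∧ V ⊆ U ∧ Set.InjOn f V := by
  intro z hzJ
  have hzU : z ∈ U := hJU hzJ
  have hz1 : ‖z‖ = 1 := by
    simpa [Metric.mem_sphere, Complex.dist_eq] using hJs hzJ
  have hlt' : ∀ w ∈ U, ‖w‖ < 1 → ‖f w‖ < 1 := by
    intro w hw h1
    exact hlt w ⟨hw, by simpa [Metric.mem_ball, Complex.dist_eq] using h1⟩
  have hgt' : ∀ w ∈ U, 1 < ‖w‖ → 1 < ‖f w‖ := by
    intro w hw h1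
    exact hgt w ⟨hw, by simpa [Metric.mem_closedBall, Complex.dist_eq] using h1⟩
  have hfa : AnalyticAt ℂ f z := hf.analyticAt (hU.mem_nhds hzU)
  have hc : ContinuousAt f z := hfa.continuousAt
  -- |f z| = 1
  have habs1 : ∀ s : ℝ, s = 1 ∨ s = -1 →
      Tendsto (fun t : ℝ => ‖f (z * (1 + s * t))‖) (𝓝[>] 0)
        (𝓝 (‖f z‖)) := by
    intro s _
    have hp : Tendsto (fun t : ℝ => z * (1 + (s : ℂ) * t)) (𝓝 0) (𝓝 z) := by
      have hco : Continuous fun t : ℝ => z * (1 + (s : ℂ) * t) := by fun_prop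
      simpa using hco.tendsto 0
    exact ((continuous_norm.tendsto (f z)).comp (hc.tendsto.comp hp)).mono_left
      nhdsWithin_le_nhds
  have hmemp : ∀ s : ℝ, ∀ᶠ t : ℝ in 𝓝[>] (0:ℝ), z * (1 + (s:ℂ) * (t:ℂ)) ∈ U := by
    intro s
    have hp : Tendsto (fun t : ℝ => z * (1 + (s : ℂ) * t)) (𝓝 0) (𝓝 z) := by
      have hco : Continuous fun t : ℝ => z * (1 + (s : ℂ) * t) := by fun_prop
      simpa using hco.tendsto 0
    exact (hp.eventually (hU.eventually_mem hzU)).filter_mono nhdsWithin_le_nhds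
  have habsp : ∀ s t : ℝ, ‖z * (1 + (s:ℂ) * t)‖ = |1 + s * t| := by
    intro s t
    rw [norm_mul, hz1, one_mul]
    rw [show (1 + (s:ℂ) * t) = ((1 + s * t : ℝ) : ℂ) by push_cast; ring]
    exact Complex.norm_real _
  have hfz : ‖f z‖ = 1 := by
    have hIoo : Set.Ioo (0:ℝ) 1 ∈ 𝓝[>] (0:ℝ) := Ioo_mem_nhdsGT_of_mem ⟨le_refl 0, one_pos⟩
    have hle : ‖f z‖ ≤ 1 := by
      apply le_of_tendsto (habs1 (-1) (Or.inr rfl))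
      filter_upwards [hmemp (-1), hIoo] with t htU ht
      have : ‖z * (1 + ((-1:ℝ):ℂ) * t)‖ = |1 + (-1) * t| := habsp (-1) t
      have h2 : ‖z * (1 + ((-1:ℝ):ℂ) * t)‖ < 1 := by
        rw [this, abs_of_pos (by simp; linarith [ht.2])]
        linarith [ht.1]
      exact le_of_lt (hlt' _ htU h2)
    have hge : 1 ≤ ‖f z‖ := by
      apply ge_of_tendsto (habs1 1 (Or.inl rfl))
      filter_upwards [hmemp 1, self_mem_nhdsWithin] with t htU ht
      have h2 : 1 < ‖z * (1 + ((1:ℝ):ℂ) * t)‖ := by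
        rw [habsp 1 t, abs_of_pos (by simp at ht ⊢; linarith)]
        simp at ht ⊢; linarith
      exact le_of_lt (hgt' _ htU h2)
    linarith
  have hfzne : f z ≠ 0 := by
    intro h0
    rw [h0] at hfz; simp at hfz
  have hzne : z ≠ 0 := by
    intro h0
    rw [h0] at hz1; simp at hz1
  -- inside point of U
  have hw₁ : ∃ w₁ ∈ U, ‖w₁‖ < 1 := by
    have hIoo : Set.Ioo (0:ℝ) 1 ∈ 𝓝[>] (0:ℝ) := Ioo_mem_nhdsGT_of_mem ⟨le_refl 0, one_pos⟩
    have := (hmemp (-1)).and (eventually_of_mem hIoo fun t ht => ht)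
    obtain ⟨t, htU, ht⟩ := this.exists
    refine ⟨_, htU, ?_⟩
    rw [habsp (-1) t, abs_of_pos (by linarith [ht.2])]
    linarith [ht.1]
  -- g = f - f z has finite positive order
  have hga : AnalyticAt ℂ (fun w => f w - f z) z := hfa.sub analyticAt_const
  have hord_ne_top : analyticOrderAt (fun w => f w - f z) z ≠ ⊤ := by
    intro htop
    have hev : ∀ᶠ w in 𝓝 z, f w - f z = 0 := analyticOrderAt_eq_top.mp htop
    have hAna : AnalyticOnNhd ℂ (fun w => f w - f z) U := fun w hw =>
      (hf.analyticAt (hU.mem_nhds hw)).sub analyticAt_const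
    have heqz : Set.EqOn (fun w => f w - f z) 0 U :=
      hAna.eqOn_zero_of_preconnected_of_eventuallyEq_zero hUconn.isPreconnected hzU hev
    obtain ⟨w₁, hw₁U, hw₁lt⟩ := hw₁
    have : f w₁ = f z := by have := heqz hw₁U; simpa [sub_eq_zero] using this
    have h5 := hlt' w₁ hw₁U hw₁lt
    rw [this, hfz] at h5
    exact lt_irrefl _ h5
  obtain ⟨n, hn⟩ := WithTop.ne_top_iff_exists.mp hord_ne_top
  obtain ⟨h, hha, hhz, hheq⟩ := (hga.analyticOrderAt_eq_natCast (n := n)).mp hn.symm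
  have heq : ∀ᶠ w in 𝓝 z, f w = f z + (w - z) ^ n * h w := by
    filter_upwards [hheq] with w hw
    have : f w - f z = (w - z) ^ n * h w := by simpa [smul_eq_mul] using hw
    linear_combination this
  have hn1 : 1 ≤ n := by
    rcases Nat.eq_zero_or_pos n with h0 | h1
    · exfalso
      subst h0
      have h0' : f z - f z = (z - z) ^ 0 * h z := by
        simpa [smul_eq_mul] using hheq.self_of_nhds
      simp at h0'
      exact hhz h0'.symm
    · exact h1
  -- sign conditions
  have hsign := fun (d : ℂ) (hd : ‖d‖ = 1) =>
    radial_sign f U hU z hzU hz1 hlt' hgt' hfz n hn1 h hha.continuousAt heq d hd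
  -- n = 1
  have hne1 : n = 1 := by
    by_contra hne
    have hn2 : 2 ≤ n := by omega
    set C : ℂ := f z * (starRingEnd ℂ) (z ^ n * h z) with hC
    have hCne : C ≠ 0 := by
      simp only [hC]
      exact mul_ne_zero hfzne (star_ne_zero.mpr (mul_ne_zero (pow_ne_zero n hzne) hhz))
    have hP : ∀ e : ℂ, ‖e‖ = 1 → 0 < e.re → 0 ≤ (C * e ^ n).re := by
      intro e he hre
      have hd : ‖(starRingEnd ℂ) e‖ = 1 := by rwa [Complex.norm_conj]
      have := (hsign ((starRingEnd ℂ) e) hd).1 (by simpa using hre)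
      have hrw : f z * (starRingEnd ℂ) ((z * (starRingEnd ℂ) e) ^ n * h z) = C * e ^ n := by
        simp only [hC, mul_pow, map_mul, map_pow, Complex.conj_conj]
        ring
      rwa [hrw] at this
    have hN : ∀ e : ℂ, ‖e‖ = 1 → e.re < 0 → (C * e ^ n).re ≤ 0 := by
      intro e he hre
      have hd : ‖(starRingEnd ℂ) e‖ = 1 := by rwa [Complex.norm_conj]
      have := (hsign ((starRingEnd ℂ) e) hd).2 (by simpa using hre)
      have hrw : f z * (starRingEnd ℂ) ((z * (starRingEnd ℂ) e) ^ n * h z) = C * e ^ n := by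
        simp only [hC, mul_pow, map_mul, map_pow, Complex.conj_conj]
        ring
      rwa [hrw] at this
    have hπ := Real.pi_pos
    rcases Nat.even_or_odd n with heven | hodd
    · -- even case
      have hzero : ∀ e : ℂ, ‖e‖ = 1 → 0 < e.re → (C * e ^ n).re = 0 := by
        intro e he hre
        refine le_antisymm ?_ (hP e he hre)
        have h1 : ‖-e‖ = 1 := (norm_neg e).trans he
        have h2 : (-e).re < 0 := by simp [hre]
        have := hN (-e) h1 h2
        rwa [heven.neg_pow] at this
      have hre0 : C.re = 0 := by
        have := hzero 1 (by simp) (by simp)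
        simpa using this
      have him0 : C.im = 0 := by
        have hn0 : (n:ℝ) ≠ 0 := by positivity
        have he1 : ‖Complex.exp (↑(Real.pi / (2 * n)) * Complex.I)‖ = 1 :=
          Complex.norm_exp_ofReal_mul_I _
        have hre : 0 < (Complex.exp (↑(Real.pi / (2 * n)) * Complex.I)).re := by
          rw [Complex.exp_ofReal_mul_I_re]
          apply Real.cos_pos_of_mem_Ioo
          constructor
          · have : 0 < Real.pi / (2 * n) := by positivity
            linarith
          · rw [div_lt_div_iff₀ (by positivity) (by norm_num)]
            have : (2:ℝ) ≤ (n:ℝ) := by exact_mod_cast hn2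
            nlinarith
        have hpow : Complex.exp (↑(Real.pi / (2 * n)) * Complex.I) ^ n = Complex.I := by
          rw [← Complex.exp_nat_mul]
          have hnC : (n:ℂ) ≠ 0 := Nat.cast_ne_zero.mpr (by omega)
          rw [show (n : ℂ) * (↑(Real.pi / (2 * n)) * Complex.I) = ↑(Real.pi / 2) * Complex.I by
            push_cast
            field_simp]
          rw [Complex.exp_mul_I]
          rw [show ((Real.pi / 2 : ℝ) : ℂ) = (Real.pi : ℂ) / 2 by push_cast; ring]
          rw [Complex.cos_pi_div_two, Complex.sin_pi_div_two]
          ring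
        have := hzero _ he1 hre
        rw [hpow] at this
        simpa [Complex.mul_re] using this
      exact hCne (Complex.ext hre0 him0)
    · -- odd case
      have hn3 : 3 ≤ n := by
        rcases hodd with ⟨k, hk⟩
        omega
      set x : ℂ := -(starRingEnd ℂ) C with hx
      have hxne : x ≠ 0 := by
        simp only [hx]
        exact neg_ne_zero.mpr (star_ne_zero.mpr hCne)
      set β : ℝ := x.arg with hβ
      have hβle : β ≤ Real.pi := Complex.arg_le_pi x
      have hβgt : -Real.pi < β := Complex.neg_pi_lt_arg x
      have hn0 : (0:ℝ) < n := by positivity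
      have he1 : ‖Complex.exp (↑(β / n) * Complex.I)‖ = 1 :=
        Complex.norm_exp_ofReal_mul_I _
      have hre : 0 < (Complex.exp (↑(β / n) * Complex.I)).re := by
        rw [Complex.exp_ofReal_mul_I_re]
        apply Real.cos_pos_of_mem_Ioo
        have h3 : (3:ℝ) ≤ (n:ℝ) := by exact_mod_cast hn3
        constructor
        · rw [lt_div_iff₀ hn0]
          nlinarith
        · rw [div_lt_iff₀ hn0]
          nlinarith
      have hpow : Complex.exp (↑(β / n) * Complex.I) ^ n = x / ↑(‖x‖) := by
        rw [← Complex.exp_nat_mul]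
        have hnC : (n:ℂ) ≠ 0 := Nat.cast_ne_zero.mpr (by omega)
        rw [show (n : ℂ) * (↑(β / n) * Complex.I) = ↑β * Complex.I by
          push_cast
          field_simp]
        have habsx := Complex.norm_mul_exp_arg_mul_I x
        have habsne : (‖x‖ : ℂ) ≠ 0 := by
          simpa using (norm_ne_zero_iff.mpr hxne)
        rw [hβ, eq_div_iff habsne]
        linear_combination habsx
      have := hP _ he1 hre
      rw [hpow] at this
      have hval : C * (x / ↑(‖x‖)) = ↑(-(Complex.normSq C / ‖x‖)) := by
        rw [hx]
        push_cast
        rw [show C * (-(starRingEnd ℂ) C / ↑(‖x‖)) =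
            -(C * (starRingEnd ℂ) C) / ↑(‖x‖) by ring]
        rw [Complex.mul_conj]
        ring
      rw [hval, Complex.ofReal_re] at this
      have hnsq : 0 < Complex.normSq C := Complex.normSq_pos.mpr hCne
      have habsx : 0 < ‖x‖ := norm_pos_iff.mpr hxne
      rw [hx] at habsx
      have : Complex.normSq C / ‖x‖ ≤ 0 := by linarith
      rw [hx] at this
      have := div_pos hnsq habsx
      linarith
  -- derivative at z is h z ≠ 0
  subst hne1
  have hdh : DifferentiableAt ℂ h z := hha.differentiableAt
  have hF : HasDerivAt (fun w => f z + (w - z) ^ 1 * h w) (h z) z := by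
    have h1 : HasDerivAt (fun w : ℂ => w - z) 1 z := (hasDerivAt_id z).sub_const z
    have h2 : HasDerivAt (fun w : ℂ => (w - z) * h w) (1 * h z + (z - z) * deriv h z) z :=
      h1.mul hdh.hasDerivAt
    have h3 : HasDerivAt (fun w : ℂ => (w - z) * h w) (h z) z := by
      simpa using h2
    have h4 := h3.const_add (f z)
    simpa [pow_one] using h4
  have hfd : HasDerivAt f (h z) z := hF.congr_of_eventuallyEq heq
  obtain ⟨p, hp⟩ := hfa
  have hs := hp.hasStrictDerivAt
  have huniq : (p 1 fun _ => 1) = h z := hs.hasDerivAt.unique hfd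
  rw [huniq] at hs
  have H := hs.hasStrictFDerivAt_equiv hhz
  refine ⟨(HasStrictFDerivAt.toOpenPartialHomeomorph f H).source ∩ U,
    (HasStrictFDerivAt.toOpenPartialHomeomorph f H).open_source.inter hU,
    ⟨HasStrictFDerivAt.mem_toOpenPartialHomeomorph_source H, hzU⟩, Set.inter_subset_right, ?_⟩
  have hinj := (HasStrictFDerivAt.toOpenPartialHomeomorph f H).injOn.mono
    (Set.inter_subset_left (s := (HasStrictFDerivAt.toOpenPartialHomeomorph f H).source) (t := U))
  rwa [HasStrictFDerivAt.toOpenPartialHomeomorph_coe H] at hinj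
end
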